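/- arXiv:1006.2562 — 7 statements merged into one kernel-verified Lean document; each statement's English description precedes it below -/
import Mathlib

section
/- There exists a unique sequence of polynomials f_0(X,Y), f_1(X,Y), ... in the noncommutative polynomial ring Z⟨X,Y⟩ such that in the formal power series ring Z⟨X,Y⟩[[T]] one has (1 - (X+Y)T) = (1 - XT)(1 - YT)·∏_{k=0}^∞ (1 - f_k(X,Y)·XY·T^{k+2}). -/
/-- The generator `X` of `ℤ⟨X,Y⟩`. -/
noncomputable def ncX : FreeAlgebra ℤ (Fin 2) := FreeAlgebra.ι ℤ 0

/-- The generator `Y` of `ℤ⟨X,Y⟩`. -/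
noncomputable def ncY : FreeAlgebra ℤ (Fin 2) := FreeAlgebra.ι ℤ 1

namespace DeSmitAux

open PowerSeries

abbrev Alg := FreeAlgebra ℤ (Fin 2)

noncomputable def L : Alg⟦X⟧ := 1 - C (ncX + ncY) * X

noncomputable def Q : Alg⟦X⟧ := (1 - C ncX * X) * (1 - C ncY * X)

noncomputable def prodd (f : ℕ → Alg) (n : ℕ) : Alg⟦X⟧ :=
  ((List.range n).map
    (fun k => 1 - C (f k * ncX * ncY) * X ^ (k + 2))).prod

lemma XY_ne_zero : ncX * ncY ≠ 0 := by
  intro h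
  have h2 : (FreeAlgebra.lift ℤ fun i => (MvPolynomial.X i : MvPolynomial (Fin 2) ℤ))
      (ncX * ncY) = 0 := by rw [h]; simp
  rw [map_mul] at h2
  simp [ncX, ncY] at h2

lemma prodd_zero (f : ℕ → Alg) : prodd f 0 = 1 := by simp [prodd]

lemma prodd_succ (f : ℕ → Alg) (n : ℕ) :
    prodd f (n + 1) = prodd f n * (1 - C (f n * ncX * ncY) * X ^ (n + 2)) := by
  simp [prodd, List.range_succ]

lemma prodd_congr (f g : ℕ → Alg) (n : ℕ) (h : ∀ k < n, f k = g k) :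
    prodd f n = prodd g n := by
  unfold prodd
  congr 1
  apply List.map_congr_left
  intro k hk
  rw [h k (List.mem_range.mp hk)]

lemma coeff_mul_factor (B : Alg⟦X⟧) (c : Alg) (d i : ℕ) :
    coeff i (B * (1 - C c * X ^ d)) =
      coeff i B - if d ≤ i then coeff (i - d) B * c else 0 := by
  have h1 : B * (1 - C c * X ^ d) = B - (B * C c) * X ^ d := by noncomm_ring
  rw [h1, map_sub, coeff_mul_X_pow']
  split_ifs with h
  · rw [coeff_mul_C]
  · rfl

lemma coeff_one_sub_C_X_mul (c : Alg) (B : Alg⟦X⟧) (i : ℕ) :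
    coeff i ((1 - C c * X) * B) =
      coeff i B - if 1 ≤ i then c * coeff (i - 1) B else 0 := by
  have h1 : (1 - C c * X) * B = B - C c * (B * X ^ 1) := by
    rw [pow_one, sub_mul, one_mul, mul_assoc, (commute_X B).symm.eq]
  rw [h1, map_sub, coeff_C_mul, coeff_mul_X_pow', mul_ite, mul_zero]

lemma coeff_QB_zero (B : Alg⟦X⟧) : coeff 0 (Q * B) = coeff 0 B := by
  rw [Q, mul_assoc, coeff_one_sub_C_X_mul, coeff_one_sub_C_X_mul]
  norm_num

lemma coeff_QB_one (B : Alg⟦X⟧) :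
    coeff 1 (Q * B) = coeff 1 B - ncY * coeff 0 B - ncX * coeff 0 B := by
  rw [Q, mul_assoc, coeff_one_sub_C_X_mul, coeff_one_sub_C_X_mul, coeff_one_sub_C_X_mul]
  norm_num

lemma coeff_QB_two (B : Alg⟦X⟧) (m : ℕ) :
    coeff (m + 2) (Q * B) =
      coeff (m + 2) B - ncY * coeff (m + 1) B
        - ncX * (coeff (m + 1) B - ncY * coeff m B) := by
  rw [Q, mul_assoc, coeff_one_sub_C_X_mul, coeff_one_sub_C_X_mul, coeff_one_sub_C_X_mul]
  have e1 : m + 2 - 1 = m + 1 := rfl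
  have e2 : m + 1 - 1 = m := rfl
  rw [e1, e2]
  split_ifs <;> first | rfl | (exfalso; omega)

lemma coeff_zero_prodd (f : ℕ → Alg) (n : ℕ) : coeff 0 (prodd f n) = 1 := by
  induction n with
  | zero => simp [prodd_zero]
  | succ n ih =>
    rw [prodd_succ, coeff_mul_factor, if_neg (by omega), sub_zero, ih]

lemma coeff_one_prodd (f : ℕ → Alg) (n : ℕ) : coeff 1 (prodd f n) = 0 := by
  induction n with
  | zero => simp [prodd_zero]
  | succ n ih =>
    rw [prodd_succ, coeff_mul_factor, if_neg (by omega), sub_zero, ih]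

lemma coeff_prodd_mem (f : ℕ → Alg) (n j : ℕ) (hj : 2 ≤ j) :
    ∃ h : Alg, coeff j (prodd f n) = h * ncX * ncY := by
  induction n with
  | zero =>
    refine ⟨0, ?_⟩
    rw [prodd_zero]
    have : (coeff j) (1 : Alg⟦X⟧) = 0 := by
      rw [coeff_one, if_neg (by omega)]
    rw [this, zero_mul, zero_mul]
  | succ n ih =>
    obtain ⟨h, hh⟩ := ih
    rw [prodd_succ, coeff_mul_factor]
    split_ifs with hd
    · exact ⟨h - coeff (j - (n + 2)) (prodd f n) * (f n), by
        rw [hh]; noncomm_ring⟩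
    · exact ⟨h, by rw [sub_zero, hh]⟩

lemma coeff_zero_QP (f : ℕ → Alg) (n : ℕ) : coeff 0 (Q * prodd f n) = 1 := by
  rw [coeff_QB_zero, coeff_zero_prodd]

lemma coeff_L_zero : coeff 0 L = 1 := by simp [L]

lemma coeff_L_one : coeff 1 L = -(ncX + ncY) := by simp [L]

lemma coeff_L_ge (m : ℕ) : coeff (m + 2) L = 0 := by
  simp [L, coeff_one, coeff_X]

/-- Divisibility of the discrepancy coefficient by `XY` on the right. -/
lemma div_lemma (f : ℕ → Alg) (m : ℕ) :
    ∃ h : Alg, coeff (m + 2) (Q * prodd f m) = h * ncX * ncY := by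
  rw [coeff_QB_two]
  obtain ⟨h1, e1⟩ := coeff_prodd_mem f m (m + 2) (by omega)
  match m with
  | 0 =>
    rw [e1, coeff_one_prodd, coeff_zero_prodd]
    exact ⟨h1 + 1, by noncomm_ring⟩
  | 1 =>
    obtain ⟨h2, e2⟩ := coeff_prodd_mem f 1 2 le_rfl
    rw [e1, e2, coeff_one_prodd]
    exact ⟨h1 - ncY * h2 - ncX * h2, by noncomm_ring⟩
  | (m + 2) =>
    obtain ⟨h2, e2⟩ := coeff_prodd_mem f (m + 2) (m + 3) (by omega)
    obtain ⟨h3, e3⟩ := coeff_prodd_mem f (m + 2) (m + 2) (by omega)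
    rw [e1]
    rw [show m + 2 + 1 = m + 3 from rfl, e2, e3]
    exact ⟨h1 - ncY * h2 - (ncX * h2 - ncX * ncY * h3), by noncomm_ring⟩

/-- The sequence, by strong recursion. -/
noncomputable def ff (m : ℕ) : Alg :=
  (div_lemma (fun k => if h : k < m then ff k else 0) m).choose
termination_by m
decreasing_by all_goals omega

lemma ff_spec (m : ℕ) : ff m * ncX * ncY = coeff (m + 2) (Q * prodd ff m) := by
  have h := (div_lemma (fun k => if h : k < m then ff k else 0) m).choose_spec
  rw [ff]
  rw [← h, prodd_congr (fun k => if h : k < m then ff k else 0) ff m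
    (fun k hk => by simp [hk])]

lemma exist_cond (f : ℕ → Alg)
    (hrec : ∀ m, f m * ncX * ncY = coeff (m + 2) (Q * prodd f m)) :
    ∀ n i, i ≤ n + 1 → coeff i L = coeff i (Q * prodd f n) := by
  intro n
  induction n with
  | zero =>
    intro i hi
    interval_cases i
    · rw [coeff_L_zero, coeff_zero_QP]
    · rw [coeff_L_one, coeff_QB_one, coeff_zero_prodd, coeff_one_prodd]
      noncomm_ring
  | succ n ihn =>
    intro i hi
    rw [prodd_succ, ← mul_assoc, coeff_mul_factor]
    rcases Nat.lt_or_ge i (n + 2) with h | h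
    · rw [if_neg (by omega), sub_zero]
      exact ihn i (by omega)
    · have hi2 : i = n + 2 := by omega
      subst hi2
      rw [if_pos le_rfl, Nat.sub_self, coeff_zero_QP, one_mul, ← hrec n,
        sub_self, coeff_L_ge]

lemma cond_rec (f : ℕ → Alg)
    (hc : ∀ m i, i ≤ m + 2 → coeff i L = coeff i (Q * prodd f (m + 1))) (m : ℕ) :
    f m * ncX * ncY = coeff (m + 2) (Q * prodd f m) := by
  have h := hc m (m + 2) le_rfl
  rw [coeff_L_ge, prodd_succ, ← mul_assoc, coeff_mul_factor, if_pos le_rfl,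
    Nat.sub_self, coeff_zero_QP, one_mul] at h
  exact (sub_eq_zero.mp h.symm).symm
  
end DeSmitAux

/-- de Smit's lemma. There is a unique sequence `f₀, f₁, …` of
noncommutative polynomials in `ℤ⟨X,Y⟩` with
`1 - (X+Y)T = (1-XT)(1-YT)·∏_{k=0}^∞ (1 - f_k(X,Y)·XY·T^{k+2})` in `ℤ⟨X,Y⟩[[T]]`;
the `T`-adic convergence of the infinite product (whose `k`-th factor is `≡ 1 mod T^{k+2}`)
is expressed by saying that every coefficient of the left side agrees with the
corresponding coefficient of every sufficiently long finite partial product. -/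
theorem deSmit_factorization :
    ∃! f : ℕ → FreeAlgebra ℤ (Fin 2),
      ∀ m i : ℕ, i ≤ m + 2 →
        PowerSeries.coeff i
            (1 - PowerSeries.C (ncX + ncY) * PowerSeries.X) =
        PowerSeries.coeff i
            ((1 - PowerSeries.C ncX * PowerSeries.X) *
              (1 - PowerSeries.C ncY * PowerSeries.X) *
              (((List.range (m + 1)).map
                (fun k => 1 - PowerSeries.C (f k * ncX * ncY) *
                  PowerSeries.X ^ (k + 2))).prod)) := by
  have hffc : ∀ m i : ℕ, i ≤ m + 2 →
      PowerSeries.coeff i DeSmitAux.L =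
        PowerSeries.coeff i (DeSmitAux.Q * DeSmitAux.prodd DeSmitAux.ff (m + 1)) :=
    fun m i hi => DeSmitAux.exist_cond DeSmitAux.ff DeSmitAux.ff_spec (m + 1) i (by omega)
  refine ⟨DeSmitAux.ff, ?_, ?_⟩
  · intro m i hi
    have := hffc m i hi
    rw [DeSmitAux.L, DeSmitAux.Q, DeSmitAux.prodd] at this
    exact this
  · intro g hg
    have hgc : ∀ m i : ℕ, i ≤ m + 2 →
        PowerSeries.coeff i DeSmitAux.L =
          PowerSeries.coeff i (DeSmitAux.Q * DeSmitAux.prodd g (m + 1)) := by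
      intro m i hi
      have := hg m i hi
      rw [DeSmitAux.L, DeSmitAux.Q, DeSmitAux.prodd]
      exact this
    funext m
    induction m using Nat.strong_induction_on with
    | _ m ih =>
      have h1 := DeSmitAux.cond_rec g hgc m
      have h2 := DeSmitAux.cond_rec DeSmitAux.ff hffc m
      rw [DeSmitAux.prodd_congr g DeSmitAux.ff m ih, ← h2] at h1
      have h3 : (g m - DeSmitAux.ff m) * (ncX * ncY) = 0 := by
        rw [sub_mul, ← mul_assoc, ← mul_assoc, h1, sub_self]
      rcases mul_eq_zero.mp h3 with h4 | h4
      · exact sub_eq_zero.mp h4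
      · exact absurd h4 DeSmitAux.XY_ne_zero
end

section
/- Let A be a commutative ring free of rank n ≥ 2 as a module over a commutative ring B. Then for all x, y ∈ A: s_2(x+y) = s_2(x) + s_1(x)s_1(y) + s_2(y) - s_1(xy), where s_1 denotes the trace of multiplication and s_2 the second coefficient of the characteristic polynomial of multiplication. -/
open scoped TensorProduct
open PiTensorProduct

/-- The coefficients `s_j(a)` of the characteristic polynomial of multiplication by `a`,
so that `P_a(T) = T^n - s_1(a)T^{n-1} + s_2(a)T^{n-2} - ⋯ + (-1)^n s_n(a)`. -/
noncomputable def sCoeff {B A : Type*} [CommRing B] [CommRing A] [Algebra B A] {n : ℕ}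
    (b : Module.Basis (Fin n) B A) (a : A) (j : ℕ) : B :=
  (-1) ^ j * (Matrix.charpoly (Algebra.leftMulMatrix b a)).coeff (n - j)

/-- The ideal `I(A,B) ⊆ A^{⊗n}` generated by
`s_j(a) - Σ_{i₁<⋯<i_j} a^{(i₁)}⋯a^{(i_j)}` for `a ∈ A`, `1 ≤ j ≤ n`. -/
noncomputable def snIdeal {B A : Type*} [CommRing B] [CommRing A] [Algebra B A] {n : ℕ}
    (b : Module.Basis (Fin n) B A) : Ideal (⨂[B] _ : Fin n, A) :=
  Ideal.span { z | ∃ (a : A) (j : Fin n), z =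
    (algebraMap B (⨂[B] _ : Fin n, A)) (sCoeff b a ((j : ℕ) + 1)) -
      ∑ s ∈ Finset.powersetCard ((j : ℕ) + 1) (Finset.univ : Finset (Fin n)),
        tprod B (fun i => if i ∈ s then a else 1) }

/-- The Sₙ-closure `G(A/B) = A^{⊗n}/I(A,B)`. -/
noncomputable abbrev SnClosure {B A : Type*} [CommRing B] [CommRing A] [Algebra B A] {n : ℕ}
    (b : Module.Basis (Fin n) B A) : Type _ :=
  (⨂[B] _ : Fin n, A) ⧸ snIdeal b

/-- `a^{(i)}`: the image in `G(A/B)` of `1 ⊗ ⋯ ⊗ a ⊗ ⋯ ⊗ 1` with `a` in position `i`. -/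
noncomputable def tf {B A : Type*} [CommRing B] [CommRing A] [Algebra B A] {n : ℕ}
    (b : Module.Basis (Fin n) B A) (a : A) (i : Fin n) : SnClosure b :=
  (Ideal.Quotient.mk (snIdeal b)) (tprod B (fun p => if p = i then a else 1))

section Aux

open Polynomial Finset Matrix Equiv

variable {R : Type*} [CommRing R] {n : ℕ}

variable {R : Type*} [CommRing R] {n : ℕ}

private lemma sum_swap_filter (g : Fin n → Fin n → R) :
    ∑ p ∈ Finset.univ.filter (fun p : Fin n × Fin n => p.2 < p.1), g p.1 p.2 =
      ∑ p ∈ Finset.univ.filter (fun p : Fin n × Fin n => p.1 < p.2), g p.2 p.1 := by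
  apply Finset.sum_nbij' (fun p => Prod.swap p) (fun p => Prod.swap p) <;>
    simp [Finset.mem_filter]

private lemma sum_prod_split (g : Fin n → Fin n → R) :
    ∑ i : Fin n, ∑ j : Fin n, g i j =
      (∑ i : Fin n, g i i) +
        ∑ p ∈ Finset.univ.filter (fun p : Fin n × Fin n => p.1 < p.2),
          (g p.1 p.2 + g p.2 p.1) := by
  classical
  rw [← Finset.sum_product']
  rw [← Finset.sum_filter_add_sum_filter_not (Finset.univ ×ˢ Finset.univ)
      (fun p : Fin n × Fin n => p.1 = p.2)]
  congr 1
  · apply Finset.sum_nbij' (fun p => p.1) (fun i => (i, i)) <;> simp +contextual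
  · rw [← Finset.sum_filter_add_sum_filter_not
        (Finset.filter (fun p : Fin n × Fin n => ¬ p.1 = p.2) (Finset.univ ×ˢ Finset.univ))
        (fun p : Fin n × Fin n => p.1 < p.2), Finset.filter_filter, Finset.filter_filter]
    rw [Finset.sum_add_distrib]
    congr 1
    · apply Finset.sum_congr _ (fun _ _ => rfl)
      apply Finset.filter_congr
      intro p _
      constructor
      · rintro ⟨_, h⟩; exact h
      · intro h; exact ⟨ne_of_lt h, h⟩
    · rw [← sum_swap_filter g]
      apply Finset.sum_congr _ (fun _ _ => rfl)
      apply Finset.filter_congr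
      intro p _
      constructor
      · rintro ⟨h1, h2⟩; omega
      · intro h; constructor <;> omega


private lemma powersetCard_two_sum (f : Finset (Fin n) → R) :
    ∑ t ∈ Finset.powersetCard 2 (Finset.univ : Finset (Fin n)), f t =
      ∑ p ∈ Finset.univ.filter (fun p : Fin n × Fin n => p.1 < p.2), f {p.1, p.2} := by
  symm
  apply Finset.sum_bij (fun p _ => ({p.1, p.2} : Finset (Fin n)))
  · rintro ⟨a, b⟩ hab
    simp only [Finset.mem_filter] at hab
    simp [Finset.mem_powersetCard, Finset.card_insert_of_notMem,
      Finset.card_pair (ne_of_lt hab.2)]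
  · rintro ⟨a, b⟩ hab ⟨c, d⟩ hcd h
    simp only [Finset.mem_filter] at hab hcd
    have hac : a = c ∧ b = d := by
      have h' : ({a, b} : Set (Fin n)) = {c, d} := by
        have := congrArg (fun s : Finset (Fin n) => (s : Set (Fin n))) h
        simpa using this
      rcases Set.pair_eq_pair_iff.mp h' with ⟨h1, h2⟩ | ⟨h1, h2⟩
      · exact ⟨h1, h2⟩
      · exfalso; subst h1 h2; exact absurd hcd.2 (not_lt.mpr hab.2.le)
    simp [hac.1, hac.2]
  · intro t ht
    rw [Finset.mem_powersetCard] at ht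
    obtain ⟨a, b, hab, rfl⟩ := Finset.card_eq_two.mp ht.2
    rcases lt_or_gt_of_ne hab with h | h
    · exact ⟨(a, b), by simp [h], rfl⟩
    · exact ⟨(b, a), by simp [h], by rw [Finset.pair_comm]⟩
  · intros; rfl

private lemma prod_X_sub_C_coeff_two (hn : 2 ≤ n) (a : Fin n → R) :
    (∏ i : Fin n, (X - C (a i))).coeff (n - 2) =
      ∑ p ∈ Finset.univ.filter (fun p : Fin n × Fin n => p.1 < p.2), a p.1 * a p.2 := by
  have h1 : ∀ i : Fin n, X - C (a i) = X + C (-a i) := by intro i; rw [map_neg]; ring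
  simp_rw [h1]
  rw [Finset.prod_X_add_C_coeff _ _ (by simp [Nat.sub_le])]
  rw [show (Finset.univ : Finset (Fin n)).card - (n - 2) = 2 by simp; omega]
  rw [powersetCard_two_sum]
  apply Finset.sum_congr rfl
  rintro ⟨i, j⟩ hij
  simp only [Finset.mem_filter] at hij
  rw [Finset.prod_pair (ne_of_lt hij.2)]
  ring

private lemma not_isSwap_one : ¬ (1 : Equiv.Perm (Fin n)).IsSwap := by
  rintro ⟨a, b, hab, h⟩
  apply hab
  have := congrArg (fun f : Equiv.Perm (Fin n) => f a) h
  simpa using this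

private lemma swap_inj {a b c d : Fin n} (hab : a < b) (hcd : c < d)
    (h : Equiv.swap a b = Equiv.swap c d) : a = c ∧ b = d := by
  have hd : Equiv.swap a b c = d := by rw [h, Equiv.swap_apply_left]
  rcases eq_or_ne c a with rfl | h1
  · rw [Equiv.swap_apply_left] at hd
    exact ⟨rfl, hd⟩
  rcases eq_or_ne c b with rfl | h2
  · rw [Equiv.swap_apply_right] at hd
    exact absurd (hab.trans (hd ▸ hcd)) (lt_irrefl a)
  · rw [Equiv.swap_apply_of_ne_of_ne h1 h2] at hd
    exact absurd hd (ne_of_lt hcd)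

private lemma charpoly_coeff_sub_two (hn : 2 ≤ n) (M : Matrix (Fin n) (Fin n) R) :
    M.charpoly.coeff (n - 2) =
      (∑ p ∈ Finset.univ.filter (fun p : Fin n × Fin n => p.1 < p.2), M p.1 p.1 * M p.2 p.2)
      - ∑ p ∈ Finset.univ.filter (fun p : Fin n × Fin n => p.1 < p.2),
          M p.1 p.2 * M p.2 p.1 := by
  nontriviality R
  classical
  rw [Matrix.charpoly, Matrix.det_apply', Polynomial.finset_sum_coeff]
  have hcoeff : ∀ σ : Equiv.Perm (Fin n),
      (((Equiv.Perm.sign σ : ℤ) : R[X]) * ∏ i, charmatrix M (σ i) i).coeff (n - 2) =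
        ((Equiv.Perm.sign σ : ℤ) : R) * (∏ i, charmatrix M (σ i) i).coeff (n - 2) := by
    intro σ
    rw [← Polynomial.C_eq_intCast, Polynomial.coeff_C_mul]
  simp_rw [hcoeff]
  set P : Finset (Equiv.Perm (Fin n)) :=
    insert 1 (Finset.univ.filter Equiv.Perm.IsSwap) with hP
  rw [← Finset.sum_subset (Finset.subset_univ P) ?_]
  · rw [hP, Finset.sum_insert (by simp [not_isSwap_one])]
    have h1 : ((Equiv.Perm.sign (1 : Equiv.Perm (Fin n)) : ℤ) : R) *
        (∏ i, charmatrix M ((1 : Equiv.Perm (Fin n)) i) i).coeff (n - 2) =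
        ∑ p ∈ Finset.univ.filter (fun p : Fin n × Fin n => p.1 < p.2),
          M p.1 p.1 * M p.2 p.2 := by
      simp only [Equiv.Perm.sign_one, Units.val_one, Int.cast_one, one_mul,
        Equiv.Perm.one_apply, charmatrix_apply_eq]
      exact prod_X_sub_C_coeff_two hn (fun i => M i i)
    rw [h1]
    have h2 : ∑ σ ∈ Finset.univ.filter Equiv.Perm.IsSwap,
        ((Equiv.Perm.sign σ : ℤ) : R) * (∏ i, charmatrix M (σ i) i).coeff (n - 2) =
        ∑ p ∈ Finset.univ.filter (fun p : Fin n × Fin n => p.1 < p.2),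
          -(M p.1 p.2 * M p.2 p.1) := by
      symm
      apply Finset.sum_bij (fun p _ => Equiv.swap p.1 p.2)
      · rintro ⟨a, b⟩ hab
        simp only [Finset.mem_filter] at hab ⊢
        exact ⟨Finset.mem_univ _, ⟨a, b, ne_of_lt hab.2, rfl⟩⟩
      · rintro ⟨a, b⟩ hab ⟨c, d⟩ hcd h
        simp only [Finset.mem_filter] at hab hcd
        obtain ⟨h1, h2⟩ := swap_inj hab.2 hcd.2 h
        simp [h1, h2]
      · intro σ hσ
        simp only [Finset.mem_filter] at hσ
        obtain ⟨a, b, hab, rfl⟩ := hσ.2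
        rcases lt_or_gt_of_ne hab with h | h
        · exact ⟨(a, b), by simp [h], rfl⟩
        · exact ⟨(b, a), by simp [h], by rw [Equiv.swap_comm]⟩
      · rintro ⟨i, j⟩ hij
        simp only [Finset.mem_filter] at hij
        have hij' : i ≠ j := ne_of_lt hij.2
        have hsign : ((Equiv.Perm.sign (Equiv.swap i j) : ℤ) : R) = -1 := by
          rw [Equiv.Perm.sign_swap hij']; simp
        rw [hsign]
        have hprod : ∏ k, charmatrix M (Equiv.swap i j k) k =
            C (M i j * M j i) * ∏ k ∈ Finset.univ \ {i, j}, (X - C (M k k)) := by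
          rw [← Finset.prod_sdiff (Finset.subset_univ {i, j})]
          rw [Finset.prod_pair hij']
          have e1 : charmatrix M (Equiv.swap i j i) i = - C (M j i) := by
            rw [Equiv.swap_apply_left, charmatrix_apply_ne _ _ _ hij'.symm]
          have e2 : charmatrix M (Equiv.swap i j j) j = - C (M i j) := by
            rw [Equiv.swap_apply_right, charmatrix_apply_ne _ _ _ hij']
          rw [e1, e2]
          have e3 : ∏ k ∈ Finset.univ \ {i, j}, charmatrix M (Equiv.swap i j k) k =
              ∏ k ∈ Finset.univ \ {i, j}, (X - C (M k k)) := by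
            apply Finset.prod_congr rfl
            intro k hk
            simp only [Finset.mem_sdiff, Finset.mem_insert, Finset.mem_singleton] at hk
            push_neg at hk
            rw [Equiv.swap_apply_of_ne_of_ne hk.2.1 hk.2.2, charmatrix_apply_eq]
          rw [e3, neg_mul_neg, ← C_mul, mul_comm (M j i) (M i j), mul_comm]
        rw [hprod]
        have hD : (∏ k ∈ Finset.univ \ {i, j}, (X - C (M k k))).Monic :=
          monic_prod_of_monic _ _ (fun k _ => monic_X_sub_C _)
        have hcard : (Finset.univ \ ({i, j} : Finset (Fin n))).card = n - 2 := by
          rw [Finset.card_sdiff_of_subset (Finset.subset_univ _), Finset.card_univ, Fintype.card_fin,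
            Finset.card_pair hij']
        have hdeg : (∏ k ∈ Finset.univ \ {i, j}, (X - C (M k k))).natDegree = n - 2 := by
          rw [natDegree_prod_of_monic _ _ (fun k _ => monic_X_sub_C _)]
          simp [natDegree_X_sub_C, hcard, natDegree_X]
        rw [Polynomial.coeff_C_mul, ← hdeg, hD.coeff_natDegree]
        ring
    rw [h2, Finset.sum_neg_distrib, ← sub_eq_add_neg]
  · intro σ _ hσ
    rw [hP, Finset.mem_insert, Finset.mem_filter] at hσ
    push_neg at hσ
    obtain ⟨hσ1, hσ2⟩ := hσ
    have hσ2' : ¬ σ.IsSwap := fun h => hσ2 (Finset.mem_univ _) h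
    have hs0 : σ.support.card ≠ 0 := fun h =>
      hσ1 (Equiv.Perm.support_eq_empty_iff.mp (Finset.card_eq_zero.mp h))
    have hs1 : σ.support.card ≠ 1 := Equiv.Perm.card_support_ne_one σ
    have hs2 : σ.support.card ≠ 2 := fun h => hσ2' (Equiv.Perm.card_support_eq_two.mp h)
    have hs3 : 3 ≤ σ.support.card := by omega
    have hsle : σ.support.card ≤ n := le_trans (Finset.card_le_univ _) (by simp)
    have hdeg : (∏ i, charmatrix M (σ i) i).natDegree ≤ n - 3 := by
      refine le_trans (Polynomial.natDegree_prod_le _ _) ?_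
      refine le_trans (Finset.sum_le_sum fun i _ => charmatrix_apply_natDegree_le (σ i) i) ?_
      rw [← Finset.card_filter]
      have h := Finset.card_filter_add_card_filter_not
        (s := (Finset.univ : Finset (Fin n))) (p := fun i : Fin n => σ i = i)
      have hsupp : Finset.univ.filter (fun i : Fin n => ¬ σ i = i) = σ.support := by
        ext x; simp [Equiv.Perm.mem_support]
      rw [hsupp, Finset.card_univ, Fintype.card_fin] at h
      omega
    rw [Polynomial.coeff_eq_zero_of_natDegree_lt (lt_of_le_of_lt hdeg (by omega)), mul_zero]

private lemma charpoly_coeff_key (hn : 2 ≤ n) (M N : Matrix (Fin n) (Fin n) R) :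
    (M + N).charpoly.coeff (n - 2) =
      M.charpoly.coeff (n - 2) + N.charpoly.coeff (n - 2) +
        M.trace * N.trace - (M * N).trace := by
  have htrN : M.trace * N.trace =
      (∑ i, M i i * N i i) +
        ∑ p ∈ Finset.univ.filter (fun p : Fin n × Fin n => p.1 < p.2),
          (M p.1 p.1 * N p.2 p.2 + M p.2 p.2 * N p.1 p.1) := by
    rw [Matrix.trace, Matrix.trace]
    simp only [Matrix.diag]
    rw [Finset.sum_mul_sum]
    exact sum_prod_split _
  have htrMN : (M * N).trace =
      (∑ i, M i i * N i i) +
        ∑ p ∈ Finset.univ.filter (fun p : Fin n × Fin n => p.1 < p.2),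
          (M p.1 p.2 * N p.2 p.1 + M p.2 p.1 * N p.1 p.2) := by
    rw [Matrix.trace]
    simp only [Matrix.diag, Matrix.mul_apply]
    exact sum_prod_split _
  have htr : M.trace * N.trace - (M * N).trace =
      ∑ p ∈ Finset.univ.filter (fun p : Fin n × Fin n => p.1 < p.2),
        ((M p.1 p.1 * N p.2 p.2 + M p.2 p.2 * N p.1 p.1) -
          (M p.1 p.2 * N p.2 p.1 + M p.2 p.1 * N p.1 p.2)) := by
    rw [htrN, htrMN, add_sub_add_left_eq_sub, ← Finset.sum_sub_distrib]
  rw [charpoly_coeff_sub_two hn, charpoly_coeff_sub_two hn, charpoly_coeff_sub_two hn,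
    add_sub_assoc, htr, ← Finset.sum_sub_distrib, ← Finset.sum_sub_distrib,
    ← Finset.sum_sub_distrib, ← Finset.sum_add_distrib, ← Finset.sum_add_distrib]
  apply Finset.sum_congr rfl
  intro p _
  simp only [Matrix.add_apply]
  ring

end Aux

/-- For `A` free of rank `n ≥ 2` over `B`,
`s₂(x+y) = s₂(x) + s₁(x)s₁(y) + s₂(y) - s₁(xy)`. -/
theorem s_two_add {B A : Type*} [CommRing B] [CommRing A] [Algebra B A] {n : ℕ}
    (hn : 2 ≤ n) (b : Module.Basis (Fin n) B A) (x y : A) :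
    sCoeff b (x + y) 2 =
      sCoeff b x 2 + sCoeff b x 1 * sCoeff b y 1 + sCoeff b y 2 - sCoeff b (x * y) 1 := by
  haveI : Nonempty (Fin n) := ⟨⟨0, by omega⟩⟩
  have hadd : Algebra.leftMulMatrix b (x + y) =
      Algebra.leftMulMatrix b x + Algebra.leftMulMatrix b y := map_add _ _ _
  have hmul : Algebra.leftMulMatrix b (x * y) =
      Algebra.leftMulMatrix b x * Algebra.leftMulMatrix b y := map_mul _ _ _
  have hs1 : ∀ M : Matrix (Fin n) (Fin n) B,
      (-1 : B) ^ 1 * M.charpoly.coeff (n - 1) = M.trace := by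
    intro M
    rw [Matrix.trace_eq_neg_charpoly_coeff, Fintype.card_fin]
    ring
  simp only [sCoeff, hadd, hmul]
  rw [charpoly_coeff_key hn, hs1, hs1, hs1]
  ring
end

section
/- Let B be a commutative ring and A = B^n with standard idempotents e_1, ..., e_n. In the quotient ring G(B^n/B) = (B^n)^{⊗n}/I(B^n, B), any monomial e_{i_1}^{(1)} e_{i_2}^{(2)} ⋯ e_{i_n}^{(n)} for which (i_1, ..., i_n) is not a permutation of (1, ..., n) is equal to zero. -/
open scoped TensorProduct
open PiTensorProduct

/-- In `G(Bⁿ/B)`, any monomial `e_{i₁}^{(1)} ⋯ e_{iₙ}^{(n)}` with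
`(i₁,…,iₙ)` not a permutation of `(1,…,n)` is zero. -/
theorem non_permutation_monomial_eq_zero {B : Type*} [CommRing B] {n : ℕ}
    (i : Fin n → Fin n) (hi : ¬ Function.Bijective i) :
    (Ideal.Quotient.mk (snIdeal (Pi.basisFun B (Fin n))))
      (PiTensorProduct.tprod B (fun j => Pi.single (i j) (1 : B))) = 0 := by
  have hns : ¬ Function.Surjective i := fun h => hi (Finite.surjective_iff_bijective.mp h)
  unfold Function.Surjective at hns
  push_neg at hns
  obtain ⟨k, hk⟩ := hns
  have hn : 0 < n := k.pos
  haveI : NeZero n := ⟨hn.ne'⟩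
  set b := Pi.basisFun B (Fin n)
  set e : Fin n → B := Pi.single k 1 with he
  -- s₁(e) = 1
  have hs : sCoeff b e 1 = 1 := by
    have htr : Matrix.trace (Algebra.leftMulMatrix b e) =
        -(Matrix.charpoly (Algebra.leftMulMatrix b e)).coeff (Fintype.card (Fin n) - 1) :=
      Matrix.trace_eq_neg_charpoly_coeff _
    have h1 : Matrix.trace (Algebra.leftMulMatrix b e) = 1 := by
      simp [b, e, Matrix.trace, Matrix.diag, Algebra.leftMulMatrix_eq_repr_mul, Pi.single_apply]
    rw [sCoeff]
    simp only [Fintype.card_fin] at htr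
    rw [pow_one, show (-1 : B) * (Matrix.charpoly (Algebra.leftMulMatrix b e)).coeff (n - 1)
        = -(Matrix.charpoly (Algebra.leftMulMatrix b e)).coeff (n - 1) by ring, ← htr, h1]
  -- the relation element for a = e, j = 0 lies in the ideal
  have hrel : (algebraMap B (⨂[B] _ : Fin n, (Fin n → B))) (sCoeff b e ((((⟨0, hn⟩ : Fin n)) : ℕ) + 1)) -
      ∑ s ∈ Finset.powersetCard ((((⟨0, hn⟩ : Fin n)) : ℕ) + 1) (Finset.univ : Finset (Fin n)),
        tprod B (fun p => if p ∈ s then e else 1) ∈ snIdeal b := by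
    apply Ideal.subset_span
    exact ⟨e, ⟨0, hn⟩, rfl⟩
  have hq : (Ideal.Quotient.mk (snIdeal b))
      ((algebraMap B (⨂[B] _ : Fin n, (Fin n → B))) (sCoeff b e 1) -
        ∑ s ∈ Finset.powersetCard 1 (Finset.univ : Finset (Fin n)),
          tprod B (fun p => if p ∈ s then e else 1)) = 0 := by
    rw [Ideal.Quotient.eq_zero_iff_mem]
    simpa using hrel
  rw [map_sub, sub_eq_zero, hs, _root_.map_one, map_sum] at hq
  -- rewrite the sum over singletons
  have hsum : ∑ s ∈ Finset.powersetCard 1 (Finset.univ : Finset (Fin n)),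
      (Ideal.Quotient.mk (snIdeal b)) (tprod B (fun p => if p ∈ s then e else 1)) =
      ∑ j : Fin n, (Ideal.Quotient.mk (snIdeal b)) (tprod B (fun p => if p = j then e else 1)) := by
    rw [Finset.powersetCard_one, Finset.sum_map]
    simp [Finset.mem_singleton]
  rw [hsum] at hq
  -- multiply the monomial by 1 = Σ_j e^{(j)}
  calc (Ideal.Quotient.mk (snIdeal b)) (tprod B (fun j => Pi.single (i j) (1 : B)))
      = (Ideal.Quotient.mk (snIdeal b)) (tprod B (fun j => Pi.single (i j) (1 : B))) * 1 := by ring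
    _ = ∑ j : Fin n, (Ideal.Quotient.mk (snIdeal b)) (tprod B (fun p => Pi.single (i p) (1 : B)))
          * (Ideal.Quotient.mk (snIdeal b)) (tprod B (fun p => if p = j then e else 1)) := by
        rw [← _root_.map_one (Ideal.Quotient.mk (snIdeal b)), hq, Finset.mul_sum]
    _ = 0 := by
        apply Finset.sum_eq_zero
        intro j _
        rw [← _root_.map_mul, tprod_mul_tprod]
        have : (fun p => Pi.single (i p) (1 : B)) * (fun p => if p = j then e else 1) = 
            Function.update (fun p => Pi.single (i p) (1 : B) * (if p = j then e else 1)) j 0 := by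
          funext p
          by_cases hp : p = j
          · subst hp
            simp only [Function.update_self, Pi.mul_apply, if_pos rfl]
            funext x
            simp only [Pi.mul_apply, Pi.zero_apply, if_true, e]
            rcases eq_or_ne x k with hx | hx
            · subst hx
              rw [Pi.single_eq_of_ne (Ne.symm (hk p)), zero_mul]
            · rw [Pi.single_eq_of_ne hx, mul_zero]
          · simp [Function.update_of_ne hp, hp]
        rw [this]
        rw [MultilinearMap.map_update_zero]  -- tprod of update 0 is 0? 
        simp
end

section
/- With B a commutative ring and A = B^n, the map sending a permutation σ ∈ S_n to the idempotent e_σ := e_{σ(1)}^{(1)} ⋯ e_{σ(n)}^{(n)} in G(B^n/B) induces an isomorphism of B[S_n]-modules B[S_n] ≅ G(B^n/B), where g ∈ S_n acts on G(B^n/B) by permuting tensor factors and satisfies g·e_σ = e_{gσ}. -/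
open scoped TensorProduct
open PiTensorProduct

/-- The idempotent `e_σ ∈ G(Bⁿ/B)` whose tensor factor in position `j` is `e_{σ⁻¹(j)}`,
i.e. `e_i` sits in position `σ(i)`. -/
noncomputable def eIdem (B : Type*) [CommRing B] {n : ℕ} (σ : Equiv.Perm (Fin n)) :
    SnClosure (Pi.basisFun B (Fin n)) :=
  (Ideal.Quotient.mk (snIdeal (Pi.basisFun B (Fin n))))
    (tprod B (fun j => Pi.single (σ⁻¹ j) (1 : B)))

set_option synthInstance.maxHeartbeats 1000000
set_option maxHeartbeats 1000000

section SnAux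
variable {B : Type*} [CommRing B] {n : ℕ}

namespace SnAux

noncomputable def coordFn (B : Type*) [CommRing B] {n : ℕ} (f : Fin n → Fin n) :
    (⨂[B] _ : Fin n, (Fin n → B)) →ₗ[B] B :=
  PiTensorProduct.lift ((MultilinearMap.mkPiAlgebra B (Fin n) B).compLinearMap
    (fun j => LinearMap.proj (f j)))

@[simp] lemma coordFn_tprod (f : Fin n → Fin n) (v : Fin n → (Fin n → B)) :
    coordFn B f (tprod B v) = ∏ j, v j (f j) := by
  simp [coordFn]

noncomputable def EV (B : Type*) [CommRing B] {n : ℕ} (f : Fin n → Fin n) :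
    (⨂[B] _ : Fin n, (Fin n → B)) :=
  tprod B (fun j => Pi.single (f j) (1 : B))

lemma coordFn_EV (f g : Fin n → Fin n) :
    coordFn B f (EV B g) = if g = f then 1 else 0 := by
  rw [EV, coordFn_tprod]
  by_cases h : g = f
  · subst h; simp
  · rw [if_neg h]
    obtain ⟨j, hj⟩ := Function.ne_iff.mp h
    exact Finset.prod_eq_zero (Finset.mem_univ j) (by simp [Pi.single_apply, Ne.symm hj])

lemma tprod_expand (v : Fin n → (Fin n → B)) :
    (tprod B v) = ∑ f : Fin n → Fin n, (∏ j, v j (f j)) • EV B f := by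
  have h : v = fun j => ∑ k, v j k • (Pi.single k (1 : B) : Fin n → B) := by
    funext j; ext x; simp [Pi.single_apply, eq_comm]
  conv_lhs => rw [h]
  rw [MultilinearMap.map_sum]
  refine Finset.sum_congr rfl fun f _ => ?_
  rw [MultilinearMap.map_smul_univ]
  rfl

lemma expand (x : ⨂[B] _ : Fin n, (Fin n → B)) :
    x = ∑ f : Fin n → Fin n, coordFn B f x • EV B f := by
  induction x using PiTensorProduct.induction_on with
  | smul_tprod r v =>
      have hc : ∀ f : Fin n → Fin n, coordFn B f (r • tprod B v) = r * ∏ j, v j (f j) := by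
        intro f; rw [map_smul, coordFn_tprod]; rfl
      simp only [hc]
      rw [tprod_expand v, Finset.smul_sum]
      simp [smul_smul]
  | add x y hx hy =>
      conv_lhs => rw [hx, hy]
      simp [add_smul, Finset.sum_add_distrib]

lemma EV_mul_EV (f g : Fin n → Fin n) :
    EV B f * EV B g = if f = g then EV B f else 0 := by
  rw [EV, EV, tprod_mul_tprod]
  by_cases h : f = g
  · subst h
    rw [if_pos rfl]
    have he : ((fun j => Pi.single (f j) (1 : B)) * fun j => Pi.single (f j) (1 : B))
        = fun j => (Pi.single (f j) (1 : B) : Fin n → B) := by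
      funext j x
      by_cases hx : x = f j <;> simp [Pi.single_apply, hx]
    rw [he]
  · rw [if_neg h]
    obtain ⟨j, hj⟩ := Function.ne_iff.mp h
    refine MultilinearMap.map_coord_zero _ j ?_
    show Pi.single (f j) (1 : B) * Pi.single (g j) (1 : B) = (0 : Fin n → B)
    ext x
    rcases eq_or_ne x (f j) with hx | hx
    · subst hx
      simp [Pi.single_apply, Ne.symm hj]
    · simp [Pi.single_apply, hx]

lemma leftMulMatrix_pi (a : Fin n → B) :
    Algebra.leftMulMatrix (Pi.basisFun B (Fin n)) a = Matrix.diagonal a := by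
  ext i j
  rw [Algebra.leftMulMatrix_eq_repr_mul, Pi.basisFun_apply, Pi.basisFun_repr]
  rcases eq_or_ne i j with h | h
  · subst h; simp
  · simp [Matrix.diagonal_apply_ne _ h, Pi.single_apply, Ne.symm h]

lemma charpoly_diag (a : Fin n → B) :
    (Matrix.diagonal a).charpoly = ∏ i, (Polynomial.X - Polynomial.C (a i)) := by
  rw [Matrix.charpoly]
  have h : (Matrix.diagonal a).charmatrix
      = Matrix.diagonal (fun i => Polynomial.X - Polynomial.C (a i)) := by
    ext i j
    rcases eq_or_ne i j with hij | hij
    · subst hij; simp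
    · rw [Matrix.charmatrix_apply_ne _ _ _ hij, Matrix.diagonal_apply_ne _ hij,
        Matrix.diagonal_apply_ne _ hij, map_zero, neg_zero]
  rw [h, Matrix.det_diagonal]

lemma sCoeff_pi (a : Fin n → B) {m : ℕ} (h1 : 1 ≤ m) (h2 : m ≤ n) :
    sCoeff (Pi.basisFun B (Fin n)) a m
      = ∑ s ∈ Finset.powersetCard m (Finset.univ : Finset (Fin n)), ∏ i ∈ s, a i := by
  rw [sCoeff, leftMulMatrix_pi, charpoly_diag]
  have hprod : (∏ i : Fin n, (Polynomial.X - Polynomial.C (a i)))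
      = ((Finset.univ.val.map a).map (fun t => Polynomial.X - Polynomial.C t)).prod := by
    rw [Multiset.map_map]; rfl
  have hcard : Multiset.card (Finset.univ.val.map a) = n := by simp
  rw [hprod, Multiset.prod_X_sub_C_coeff _ (by omega : n - m ≤ Multiset.card (Finset.univ.val.map a)),
    hcard, (by omega : n - (n - m) = m), Finset.esymm_map_val]
  rw [← mul_assoc, ← pow_add, ← two_mul, pow_mul, neg_one_sq, one_pow, one_mul]

lemma coordFn_one (f : Fin n → Fin n) :
    coordFn B f (1 : ⨂[B] _ : Fin n, (Fin n → B)) = 1 := by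
  rw [PiTensorProduct.one_def, coordFn_tprod]
  simp

lemma coordFn_algebraMap (f : Fin n → Fin n) (r : B) :
    coordFn B f ((algebraMap B (⨂[B] _ : Fin n, (Fin n → B))) r) = r := by
  rw [Algebra.algebraMap_eq_smul_one, map_smul, coordFn_one, smul_eq_mul, mul_one]

lemma coordFn_gen (a : Fin n → B) (j : Fin n) {f : Fin n → Fin n}
    (hf : Function.Bijective f) :
    coordFn B f
      ((algebraMap B (⨂[B] _ : Fin n, (Fin n → B)))
          (sCoeff (Pi.basisFun B (Fin n)) a ((j : ℕ) + 1)) -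
        ∑ s ∈ Finset.powersetCard ((j : ℕ) + 1) (Finset.univ : Finset (Fin n)),
          tprod B (fun i => if i ∈ s then a else 1)) = 0 := by
  have hj : (j : ℕ) + 1 ≤ n := j.isLt
  rw [map_sub, map_sum, coordFn_algebraMap, sCoeff_pi a (Nat.le_add_left 1 _) hj]
  have hterm : ∀ s ∈ Finset.powersetCard ((j : ℕ) + 1) (Finset.univ : Finset (Fin n)),
      coordFn B f (tprod B (fun i => if i ∈ s then a else (1 : Fin n → B)))
        = ∏ i ∈ s, a (f i) := by
    intro s _
    rw [coordFn_tprod]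
    have : ∀ i : Fin n, (if i ∈ s then a else (1 : Fin n → B)) (f i)
        = if i ∈ s then a (f i) else 1 := fun i => by split <;> rfl
    simp only [this]
    rw [Finset.prod_ite_mem Finset.univ s (fun i => a (f i)), Finset.univ_inter]
  rw [Finset.sum_congr rfl hterm]
  have hmap : Finset.univ.val.map (fun i => a (f i)) = Finset.univ.val.map a := by
    have h2 : Finset.univ.val.map f = Finset.univ.val := by
      have h3 := congrArg Finset.val (Finset.map_univ_equiv (Equiv.ofBijective f hf))
      rw [Finset.map_val] at h3
      exact h3
    calc Finset.univ.val.map (fun i => a (f i)) = (Finset.univ.val.map f).map a := by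
          rw [Multiset.map_map]; rfl
      _ = Finset.univ.val.map a := by rw [h2]
  rw [← Finset.esymm_map_val a, ← Finset.esymm_map_val (fun i => a (f i)), hmap, sub_self]

lemma single_mul_single (x y : Fin n) :
    (Pi.single x (1 : B) : Fin n → B) * Pi.single y 1
      = if x = y then Pi.single x 1 else 0 := by
  rcases eq_or_ne x y with h | h
  · subst h
    rw [if_pos rfl]
    ext t
    by_cases ht : t = x <;> simp [Pi.single_apply, ht]
  · rw [if_neg h]
    ext t
    rcases eq_or_ne t x with ht | ht
    · subst ht
      simp [Pi.single_apply, h]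
    · simp [Pi.single_apply, ht]

lemma EV_mem_snIdeal {f : Fin n → Fin n} (hf : ¬ Function.Bijective f) :
    EV B f ∈ snIdeal (Pi.basisFun B (Fin n)) := by
  have hinj : ¬ Function.Injective f := fun h => hf (Finite.injective_iff_bijective.mp h)
  rw [Function.not_injective_iff] at hinj
  obtain ⟨i, i', hii', hne⟩ := hinj
  set k := f i with hk
  set D := Finset.univ.filter (fun x => f x = k) with hD
  set m := D.card with hm
  have hiD : i ∈ D := by simp [hD]; rfl
  have hi'D : i' ∈ D := by simp [hD, ← hii']
  have h2m : 2 ≤ m := by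
    have hsub : ({i, i'} : Finset (Fin n)) ⊆ D := by
      intro x hx
      rcases Finset.mem_insert.mp hx with h | h
      · subst h; exact hiD
      · rw [Finset.mem_singleton] at h; subst h; exact hi'D
    have hc : ({i, i'} : Finset (Fin n)).card = 2 := by
      rw [Finset.card_insert_of_notMem (by simpa using hne), Finset.card_singleton]
    rw [hm, ← hc]
    exact Finset.card_le_card hsub
  have hmn : m ≤ n := by
    rw [hm]
    have := Finset.card_filter_le (Finset.univ : Finset (Fin n)) (fun x => f x = k)
    simpa using this
  set a : Fin n → B := Pi.single k 1 with ha
  set jj : Fin n := ⟨m - 1, by omega⟩ with hjj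
  have hj1 : (jj : ℕ) + 1 = m := by rw [hjj]; simp; omega
  set z := (algebraMap B (⨂[B] _ : Fin n, (Fin n → B)))
      (sCoeff (Pi.basisFun B (Fin n)) a ((jj : ℕ) + 1)) -
      ∑ s ∈ Finset.powersetCard ((jj : ℕ) + 1) (Finset.univ : Finset (Fin n)),
        tprod B (fun i => if i ∈ s then a else 1) with hz
  have hzmem : z ∈ snIdeal (Pi.basisFun B (Fin n)) :=
    Ideal.subset_span ⟨a, jj, rfl⟩
  have hs0 : sCoeff (Pi.basisFun B (Fin n)) a ((jj : ℕ) + 1) = 0 := by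
    rw [hj1, sCoeff_pi a (by omega) hmn]
    refine Finset.sum_eq_zero fun s hs => ?_
    rw [Finset.mem_powersetCard] at hs
    obtain ⟨x, hx, y, hy, hxy⟩ := Finset.one_lt_card.mp (by omega : 1 < s.card)
    have hw : ∃ w ∈ s, w ≠ k := by
      rcases eq_or_ne x k with h | h
      · exact ⟨y, hy, by rw [← h]; exact fun hh => hxy hh.symm⟩
      · exact ⟨x, hx, h⟩
    obtain ⟨w, hw, hwk⟩ := hw
    refine Finset.prod_eq_zero hw ?_
    simp [ha, Pi.single_apply, hwk]
  have hmul : EV B f * z = - EV B f := by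
    rw [hz, mul_sub, hs0, map_zero, mul_zero, Finset.mul_sum]
    have hterm : ∀ s ∈ Finset.powersetCard ((jj : ℕ) + 1) (Finset.univ : Finset (Fin n)),
        EV B f * tprod B (fun i => if i ∈ s then a else 1)
          = if s = D then EV B f else 0 := by
      intro s hs
      rw [Finset.mem_powersetCard] at hs
      rw [EV, tprod_mul_tprod]
      by_cases hsub : s ⊆ D
      · have hsD : s = D := Finset.eq_of_subset_of_card_le hsub (by rw [hs.2, hj1])
        rw [if_pos hsD]
        have hgE : ((fun j => Pi.single (f j) (1 : B)) * fun i => if i ∈ s then a else 1)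
            = fun j => (Pi.single (f j) (1 : B) : Fin n → B) := by
          funext t
          rw [Pi.mul_apply]
          by_cases ht : t ∈ s
          · rw [if_pos ht, ha]
            have hfk : f t = k := by
              have := hsub ht
              rw [hD, Finset.mem_filter] at this
              exact this.2
            rw [hfk, single_mul_single, if_pos rfl]
          · rw [if_neg ht, mul_one]
        rw [hgE]
      · rw [if_neg (by rintro rfl; exact hsub subset_rfl)]
        obtain ⟨i₀, hi₀s, hi₀D⟩ := Finset.not_subset.mp hsub
        refine MultilinearMap.map_coord_zero _ i₀ ?_
        rw [Pi.mul_apply, if_pos hi₀s, ha, single_mul_single, if_neg ?_]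
        rw [hD, Finset.mem_filter] at hi₀D
        exact fun hh => hi₀D ⟨Finset.mem_univ _, hh⟩
    rw [Finset.sum_congr rfl hterm, Finset.sum_ite_eq' _ D (fun _ => EV B f),
      if_pos (Finset.mem_powersetCard.mpr ⟨Finset.subset_univ _, by rw [hj1]⟩), zero_sub]
  have heq : EV B f = -(EV B f * z) := by rw [hmul, neg_neg]
  rw [heq]
  exact Submodule.neg_mem _ (Ideal.mul_mem_left _ _ hzmem)

local instance scc : SMulCommClass B (⨂[B] _ : Fin n, (Fin n → B))
    (⨂[B] _ : Fin n, (Fin n → B)) where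
  smul_comm b x y := by
    show b • (x * y) = x * (b • y)
    rw [PiTensorProduct.mul_def, PiTensorProduct.mul_def, map_smul]

local instance ist : IsScalarTower B (⨂[B] _ : Fin n, (Fin n → B))
    (⨂[B] _ : Fin n, (Fin n → B)) where
  smul_assoc b x y := by
    show (b • x) * y = b • (x * y)
    rw [PiTensorProduct.mul_def, PiTensorProduct.mul_def, map_smul, LinearMap.smul_apply]

def JSet (B : Type*) [CommRing B] (n : ℕ) : Set (⨂[B] _ : Fin n, (Fin n → B)) :=
  EV B '' {f : Fin n → Fin n | ¬ Function.Bijective f}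

lemma EV_mul_mem_spanJ (g : Fin n → Fin n) {y : ⨂[B] _ : Fin n, (Fin n → B)}
    (hy : y ∈ Submodule.span B (JSet B n)) :
    EV B g * y ∈ Submodule.span B (JSet B n) := by
  induction hy using Submodule.span_induction with
  | mem w hw =>
    obtain ⟨h, hh, rfl⟩ := hw
    rw [EV_mul_EV]
    rcases eq_or_ne g h with hgh | hgh
    · rw [if_pos hgh]
      subst hgh
      exact Submodule.subset_span ⟨g, hh, rfl⟩
    · rw [if_neg hgh]
      exact Submodule.zero_mem _
  | zero => rw [mul_zero]; exact Submodule.zero_mem _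
  | add u v _ _ hu hv => rw [mul_add]; exact Submodule.add_mem _ hu hv
  | smul b u _ hu => rw [mul_smul_comm]; exact Submodule.smul_mem _ _ hu

lemma mul_mem_spanJ (c : ⨂[B] _ : Fin n, (Fin n → B)) {x : ⨂[B] _ : Fin n, (Fin n → B)}
    (hx : x ∈ Submodule.span B (JSet B n)) :
    c * x ∈ Submodule.span B (JSet B n) := by
  rw [expand c, Finset.sum_mul]
  refine Submodule.sum_mem _ fun f _ => ?_
  rw [smul_mul_assoc]
  exact Submodule.smul_mem _ _ (EV_mul_mem_spanJ f hx)

lemma snIdeal_le_spanJ {x : ⨂[B] _ : Fin n, (Fin n → B)}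
    (hx : x ∈ snIdeal (Pi.basisFun B (Fin n))) :
    x ∈ Submodule.span B (JSet B n) := by
  let J : Ideal (⨂[B] _ : Fin n, (Fin n → B)) :=
    { carrier := Submodule.span B (JSet B n)
      add_mem' := fun h1 h2 => Submodule.add_mem _ h1 h2
      zero_mem' := Submodule.zero_mem _
      smul_mem' := fun c y hy => by simpa [smul_eq_mul] using mul_mem_spanJ c hy }
  have hJ : snIdeal (Pi.basisFun B (Fin n)) ≤ J := by
    rw [snIdeal]
    refine Ideal.span_le.mpr ?_
    rintro z ⟨a, j, rfl⟩
    show _ ∈ Submodule.span B (JSet B n)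
    rw [expand ((algebraMap B (⨂[B] _ : Fin n, (Fin n → B)))
        (sCoeff (Pi.basisFun B (Fin n)) a ((j : ℕ) + 1)) -
      ∑ s ∈ Finset.powersetCard ((j : ℕ) + 1) (Finset.univ : Finset (Fin n)),
        tprod B (fun i => if i ∈ s then a else 1))]
    refine Submodule.sum_mem _ fun f _ => ?_
    by_cases hf : Function.Bijective f
    · rw [coordFn_gen a j hf, zero_smul]
      exact Submodule.zero_mem _
    · exact Submodule.smul_mem _ _ (Submodule.subset_span ⟨f, hf, rfl⟩)
  exact hJ hx

lemma coordFn_spanJ {y : ⨂[B] _ : Fin n, (Fin n → B)}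
    (hy : y ∈ Submodule.span B (JSet B n)) {f : Fin n → Fin n}
    (hf : Function.Bijective f) : coordFn B f y = 0 := by
  induction hy using Submodule.span_induction with
  | mem w hw =>
    obtain ⟨h, hh, rfl⟩ := hw
    rw [coordFn_EV, if_neg]
    intro he
    exact hh (he ▸ hf)
  | zero => exact map_zero _
  | add u v _ _ hu hv => rw [map_add, hu, hv, add_zero]
  | smul b u _ hu => rw [map_smul, hu, smul_zero]

end SnAux
end SnAux


namespace SnAux

variable {B : Type*} [CommRing B] {n : ℕ}

noncomputable def mkL (B : Type*) [CommRing B] (n : ℕ) :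
    (⨂[B] _ : Fin n, (Fin n → B)) →ₗ[B] SnClosure (Pi.basisFun B (Fin n)) :=
  (Ideal.Quotient.mkₐ B (snIdeal (Pi.basisFun B (Fin n)))).toLinearMap

lemma mkL_apply (x : ⨂[B] _ : Fin n, (Fin n → B)) :
    mkL B n x = (Ideal.Quotient.mk (snIdeal (Pi.basisFun B (Fin n)))) x := rfl

lemma eIdem_eq_mkL (σ : Equiv.Perm (Fin n)) :
    eIdem B σ = mkL B n (EV B ⇑σ⁻¹) := rfl

noncomputable def phi0 (B : Type*) [CommRing B] (n : ℕ) :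
    (Equiv.Perm (Fin n) →₀ B) →ₗ[B] SnClosure (Pi.basisFun B (Fin n)) :=
  Finsupp.linearCombination B (fun σ : Equiv.Perm (Fin n) => eIdem B σ)

lemma phi0_single (σ : Equiv.Perm (Fin n)) :
    phi0 B n (Finsupp.single σ (1 : B)) = eIdem B σ := by
  rw [phi0, Finsupp.linearCombination_single, one_smul]

lemma phi0_apply (x : Equiv.Perm (Fin n) →₀ B) :
    phi0 B n x = mkL B n (x.sum fun σ b => b • EV B ⇑σ⁻¹) := by
  rw [phi0, Finsupp.linearCombination_apply, map_finsuppSum]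
  exact Finsupp.sum_congr fun σ _ => by rw [map_smul, ← eIdem_eq_mkL]

lemma phi0_injective : Function.Injective (phi0 B n) := by
  rw [← LinearMap.ker_eq_bot, Submodule.eq_bot_iff]
  intro x hx
  rw [LinearMap.mem_ker, phi0_apply, mkL_apply, Ideal.Quotient.eq_zero_iff_mem] at hx
  have hspan := snIdeal_le_spanJ hx
  ext τ
  have hbij : Function.Bijective ⇑(τ⁻¹ : Equiv.Perm (Fin n)) :=
    (τ⁻¹ : Equiv.Perm (Fin n)).bijective
  have hco := coordFn_spanJ hspan hbij
  rw [map_finsuppSum] at hco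
  have hterm : ∀ σ ∈ x.support,
      coordFn B (⇑(τ⁻¹ : Equiv.Perm (Fin n))) (x σ • EV B ⇑(σ⁻¹ : Equiv.Perm (Fin n)))
        = if σ = τ then x σ else 0 := by
    intro σ _
    rw [map_smul, coordFn_EV, smul_eq_mul, mul_ite, mul_one, mul_zero]
    congr 1
    simp only [eq_iff_iff]
    constructor
    · intro h
      exact inv_injective (Equiv.coe_inj.mp h)
    · rintro rfl; rfl
  rw [Finsupp.sum, Finset.sum_congr rfl hterm, Finset.sum_ite_eq' _ τ (fun σ => x σ)] at hco
  by_cases hmem : τ ∈ x.support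
  · rw [if_pos hmem] at hco
    simpa using hco
  · simpa using Finsupp.notMem_support_iff.mp hmem

lemma phi0_surjective : Function.Surjective (phi0 B n) := by
  intro yq
  obtain ⟨y, rfl⟩ := Ideal.Quotient.mk_surjective yq
  suffices h : (Ideal.Quotient.mk (snIdeal (Pi.basisFun B (Fin n)))) y
      ∈ LinearMap.range (phi0 B n) by
    obtain ⟨x, hxeq⟩ := h
    exact ⟨x, hxeq⟩
  rw [← mkL_apply, expand y, map_sum]
  refine Submodule.sum_mem _ fun f _ => ?_
  rw [map_smul]
  refine Submodule.smul_mem _ _ ?_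
  by_cases hf : Function.Bijective f
  · refine ⟨Finsupp.single ((Equiv.ofBijective f hf)⁻¹) 1, ?_⟩
    rw [phi0_single, eIdem_eq_mkL, inv_inv]
    rfl
  · rw [mkL_apply, Ideal.Quotient.eq_zero_iff_mem.mpr (EV_mem_snIdeal hf)]
    exact Submodule.zero_mem _

end SnAux


/-- `σ ↦ e_σ` induces a `B[Sₙ]`-module isomorphism
`B[Sₙ] ≅ G(Bⁿ/B)`, where `g ∈ Sₙ` acts on `G(Bⁿ/B)` by permuting the tensor factors
and satisfies `g·e_σ = e_{gσ}`. -/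
theorem snClosure_pi_regular_module {B : Type*} [CommRing B] {n : ℕ} :
    (∃ φ : MonoidAlgebra B (Equiv.Perm (Fin n)) ≃ₗ[B] SnClosure (Pi.basisFun B (Fin n)),
      ∀ σ : Equiv.Perm (Fin n), φ (MonoidAlgebra.single σ (1 : B)) = eIdem B σ) ∧
    (∀ g σ : Equiv.Perm (Fin n),
      (Ideal.Quotient.mk (snIdeal (Pi.basisFun B (Fin n))))
        ((PiTensorProduct.reindex B (fun _ : Fin n => (Fin n → B)) (g : Fin n ≃ Fin n))
          (tprod B (fun j => Pi.single (σ⁻¹ j) (1 : B)))) = eIdem B (g * σ)) := by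
  constructor
  · refine ⟨(MonoidAlgebra.coeffLinearEquiv B).trans (LinearEquiv.ofBijective (SnAux.phi0 B n)
      ⟨SnAux.phi0_injective, SnAux.phi0_surjective⟩), ?_⟩
    intro σ
    rw [LinearEquiv.trans_apply]
    exact SnAux.phi0_single σ
  · intro g σ
    rw [PiTensorProduct.reindex_tprod]
    rw [eIdem]
    congr 1
end

section
/- The polynomial ring Z[X_1, ..., X_n] is a free module of rank n! over its subring Z[Σ_1, ..., Σ_n] generated by the elementary symmetric polynomials, with basis the monomials X_1^{e_1} ⋯ X_n^{e_n} where 0 ≤ e_i < i. -/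
open MvPolynomial Finset

namespace Stmt11

variable {n : ℕ}

noncomputable def AA (n : ℕ) : Subalgebra ℤ (MvPolynomial (Fin n) ℤ) :=
  Algebra.adjoin ℤ {p : MvPolynomial (Fin n) ℤ |
          ∃ k ∈ Finset.Icc 1 n, p = MvPolynomial.esymm (Fin n) ℤ k}

/-- monomials with exponents vanishing on indices `≤ k` -/
def Tset (n k : ℕ) : Set (MvPolynomial (Fin n) ℤ) :=
  {m | ∃ c : Fin n →₀ ℕ, (∀ j : Fin n, (j : ℕ) ≤ k → c j = 0) ∧ m = monomial c 1}

noncomputable def FF (n k : ℕ) : Polynomial (MvPolynomial (Fin n) ℤ) :=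
  ∏ j ∈ Finset.univ.filter (fun j : Fin n => (j : ℕ) ≤ k), (Polynomial.X - Polynomial.C (X j))

lemma FF_monic (n k : ℕ) : (FF n k).Monic :=
  Polynomial.monic_prod_of_monic _ _ (fun j _ => Polynomial.monic_X_sub_C _)

lemma FF_natDegree {k : ℕ} (hk : k < n) : (FF n k).natDegree = k + 1 := by
  rw [FF, Polynomial.natDegree_prod _ _ (fun j _ => (Polynomial.monic_X_sub_C _).ne_zero)]
  simp only [Polynomial.natDegree_X_sub_C, Finset.sum_const, smul_eq_mul, mul_one]
  have : Finset.univ.filter (fun j : Fin n => (j : ℕ) ≤ k) = Finset.Iic (⟨k, hk⟩ : Fin n) := by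
    ext j; simp [Fin.le_def]
  rw [this, Fin.card_Iic]

lemma mul_mem_span {y x : MvPolynomial (Fin n) ℤ} {S : Set (MvPolynomial (Fin n) ℤ)}
    (hx : x ∈ Submodule.span (AA n) S) :
    y * x ∈ Submodule.span (AA n) ((y * ·) '' S) := by
  have : (fun x => y * x) '' S = ⇑(LinearMap.mulLeft (AA n) y) '' S := rfl
  rw [this, ← Submodule.map_span (LinearMap.mulLeft (AA n) y)]
  exact Submodule.mem_map_of_mem hx

end Stmt11

namespace Stmt11

lemma AA_eq_symm (n : ℕ) : AA n = symmetricSubalgebra (Fin n) ℤ := by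
  apply le_antisymm
  · rw [AA, Algebra.adjoin_le_iff]
    rintro p ⟨k, -, rfl⟩
    exact esymm_isSymmetric (Fin n) ℤ k
  · intro p hp
    obtain ⟨q, hq⟩ := esymmAlgHom_surjective (σ := Fin n) ℤ (le_of_eq (Fintype.card_fin n)) ⟨p, hp⟩
    have hpq : p = aeval (fun i : Fin n ↦ esymm (Fin n) ℤ (i + 1)) q := by
      rw [← esymmAlgHom_apply, hq]
    rw [hpq]
    have h1 : Set.range (fun i : Fin n ↦ esymm (Fin n) ℤ ((i : ℕ) + 1)) ⊆
        {p : MvPolynomial (Fin n) ℤ | ∃ k ∈ Finset.Icc 1 n, p = MvPolynomial.esymm (Fin n) ℤ k} := by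
      rintro _ ⟨i, rfl⟩
      exact ⟨(i : ℕ) + 1, Finset.mem_Icc.2 ⟨Nat.succ_le_succ (Nat.zero_le _),
        Nat.succ_le_of_lt i.2⟩, rfl⟩
    have := Algebra.adjoin_mono (R := ℤ) h1
    refine this ?_
    rw [Algebra.adjoin_range_eq_range_aeval]
    exact ⟨q, rfl⟩

lemma one_mem_Tset (k : ℕ) : (1 : MvPolynomial (Fin n) ℤ) ∈ Tset n k :=
  ⟨0, fun _ _ => rfl, by simp [monomial_zero']⟩

lemma Tset_anti {k k' : ℕ} (h : k ≤ k') : Tset n k' ⊆ Tset n k := by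
  rintro m ⟨c, hc, rfl⟩
  exact ⟨c, fun j hj => hc j (hj.trans h), rfl⟩

lemma mem_span_of_AA {a : MvPolynomial (Fin n) ℤ} (ha : a ∈ AA n) (k : ℕ) :
    a ∈ Submodule.span (AA n) (Tset n k) := by
  have h1 : (1 : MvPolynomial (Fin n) ℤ) ∈ Submodule.span (AA n) (Tset n k) :=
    Submodule.subset_span (one_mem_Tset k)
  have := Submodule.smul_mem _ (⟨a, ha⟩ : AA n) h1
  rwa [Algebra.smul_def, mul_one, show (algebraMap (AA n) (MvPolynomial (Fin n) ℤ)) ⟨a, ha⟩ = a from rfl] at this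

lemma FF_last : FF n (n - 1) = ∏ j : Fin n, (Polynomial.X - Polynomial.C (X j)) := by
  rw [FF]
  congr 1
  ext j
  simp only [Finset.mem_filter, Finset.mem_univ, true_and, iff_true]
  omega

lemma FF_coeff_symm (i : ℕ) : ((FF n (n - 1)).coeff i).IsSymmetric := by
  intro π
  have h1 : Polynomial.map (↑(rename π : MvPolynomial (Fin n) ℤ →ₐ[ℤ] MvPolynomial (Fin n) ℤ) :
      MvPolynomial (Fin n) ℤ →+* MvPolynomial (Fin n) ℤ) (FF n (n - 1)) = FF n (n - 1) := by
    rw [FF_last, Polynomial.map_prod]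
    simp only [Polynomial.map_sub, Polynomial.map_X, Polynomial.map_C, AlgHom.coe_toRingHom,
      rename_X]
    exact Fintype.prod_equiv π _ _ (fun j => rfl)
  conv_rhs => rw [← h1]
  rw [Polynomial.coeff_map]
  rfl

lemma FF_coeff_mem {k : ℕ} (hk : k < n) (i : ℕ) :
    (FF n k).coeff i ∈ Submodule.span (AA n) (Tset n k) := by
  have aux : ∀ d (k : ℕ), k < n → n - 1 - k = d → ∀ i : ℕ,
      (FF n k).coeff i ∈ Submodule.span (AA n) (Tset n k) := by
    intro d
    induction d with
    | zero =>
      intro k hk hd i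
      have hk' : k = n - 1 := by omega
      subst hk'
      refine mem_span_of_AA ?_ _
      rw [AA_eq_symm]
      exact FF_coeff_symm i
    | succ d ih =>
      intro k hk hd i
      have hk1 : k + 1 < n := by omega
      set jk : Fin n := ⟨k + 1, hk1⟩ with hjk
      -- the product relation
      have hins : Finset.univ.filter (fun j : Fin n => (j : ℕ) ≤ k + 1)
          = insert jk (Finset.univ.filter (fun j : Fin n => (j : ℕ) ≤ k)) := by
        ext j
        simp only [Finset.mem_filter, Finset.mem_univ, true_and, Finset.mem_insert, Fin.ext_iff,
          hjk]
        omega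
      have hnotmem : jk ∉ Finset.univ.filter (fun j : Fin n => (j : ℕ) ≤ k) := by
        simp [hjk]
      have hFF : FF n (k + 1) = (Polynomial.X - Polynomial.C (X jk)) * FF n k := by
        rw [FF, hins, Finset.prod_insert hnotmem]; rfl
      -- the coefficient recurrence
      have hrec : ∀ i : ℕ, (FF n k).coeff i
          = (FF n (k + 1)).coeff (i + 1) + X jk * (FF n k).coeff (i + 1) := by
        intro i
        rw [hFF, sub_mul, mul_comm (Polynomial.X) (FF n k), Polynomial.coeff_sub,
          Polynomial.coeff_mul_X, mul_comm (Polynomial.C (X jk)) (FF n k),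
          Polynomial.coeff_mul_C]
        ring
      -- X jk multiplies span into span
      have hmul : ∀ x ∈ Submodule.span (AA n) (Tset n k),
          X jk * x ∈ Submodule.span (AA n) (Tset n k) := by
        intro x hx
        refine Submodule.span_le.2 ?_ (mul_mem_span (y := X jk) hx)
        rintro _ ⟨_, ⟨c, hc, rfl⟩, rfl⟩
        refine Submodule.subset_span ⟨Finsupp.single jk 1 + c, fun j hj => ?_, ?_⟩
        · rw [Finsupp.add_apply, Finsupp.single_apply, if_neg, hc j hj]
          intro h
          rw [← h, hjk] at hj
          simp only [Fin.val_mk] at hj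
          omega
        · show X jk * monomial c 1 = monomial (Finsupp.single jk 1 + c) 1
          rw [X, monomial_mul, one_mul]
      have desc : ∀ m i, k + 2 ≤ i + m → (FF n k).coeff i ∈ Submodule.span (AA n) (Tset n k) := by
        intro m
        induction m with
        | zero =>
          intro i hi
          have : (FF n k).natDegree < i := by rw [FF_natDegree hk]; omega
          rw [Polynomial.coeff_eq_zero_of_natDegree_lt this]
          exact Submodule.zero_mem _
        | succ m ihm =>
          intro i hi
          rcases le_or_gt (k + 2) (i + m) with h | h
          · exact ihm i h
          · rw [hrec i]
            refine Submodule.add_mem _ ?_ (hmul _ (ihm (i + 1) (by omega)))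
            have := ih (k + 1) hk1 (by omega) (i + 1)
            exact Submodule.span_mono (Tset_anti (Nat.le_succ k)) this
      exact desc (k + 2) i (by omega)
  exact aux (n - 1 - k) k hk rfl i

end Stmt11

namespace Stmt11

def Uset (n : ℕ) (kk : Fin n) : Set (MvPolynomial (Fin n) ℤ) :=
  {m | ∃ c : Fin n →₀ ℕ, (∀ j : Fin n, (j : ℕ) < (kk : ℕ) → c j = 0) ∧ c kk ≤ (kk : ℕ)
    ∧ m = monomial c 1}

lemma X_pow_mem (kk : Fin n) :
    (X kk : MvPolynomial (Fin n) ℤ) ^ ((kk : ℕ) + 1) ∈ Submodule.span (AA n) (Uset n kk) := by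
  set k := (kk : ℕ) with hkdef
  have hk : k < n := kk.2
  have heval : Polynomial.eval (X kk : MvPolynomial (Fin n) ℤ) (FF n k) = 0 := by
    rw [FF, Polynomial.eval_prod]
    refine Finset.prod_eq_zero (i := kk) (by simp [hkdef]) ?_
    simp
  have hdeg : (FF n k).natDegree = k + 1 := FF_natDegree hk
  have hsum := Polynomial.eval_eq_sum_range (p := FF n k) (X kk : MvPolynomial (Fin n) ℤ)
  rw [heval, hdeg, Finset.sum_range_succ] at hsum
  have hmonic : (FF n k).coeff (k + 1) = 1 := by
    have := (FF_monic n k).coeff_natDegree; rwa [hdeg] at this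
  rw [hmonic, one_mul] at hsum
  have hX : (X kk : MvPolynomial (Fin n) ℤ) ^ (k + 1)
      = -∑ i ∈ Finset.range (k + 1), (FF n k).coeff i * X kk ^ i := by
    linear_combination -hsum
  rw [hX]
  refine Submodule.neg_mem _ (Submodule.sum_mem _ fun i hi => ?_)
  rw [Finset.mem_range] at hi
  rw [mul_comm]
  have h2 := mul_mem_span (y := (X kk : MvPolynomial (Fin n) ℤ) ^ i) (FF_coeff_mem hk i)
  refine Submodule.span_le.2 ?_ h2
  rintro _ ⟨_, ⟨c, hc, rfl⟩, rfl⟩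
  show (X kk : MvPolynomial (Fin n) ℤ) ^ i * monomial c 1 ∈ _
  rw [X_pow_eq_monomial, monomial_mul, one_mul]
  refine Submodule.subset_span ⟨Finsupp.single kk i + c, fun j hj => ?_, ?_, rfl⟩
  · rw [Finsupp.add_apply, Finsupp.single_apply, if_neg, hc j (le_of_lt hj)]
    intro h
    rw [← h] at hj
    omega
  · rw [Finsupp.add_apply, Finsupp.single_apply, if_pos rfl, hc kk le_rfl]
    omega

noncomputable def bb (n : ℕ) (e : (i : Fin n) → Fin ((i : ℕ) + 1)) : MvPolynomial (Fin n) ℤ :=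
  ∏ i : Fin n, (MvPolynomial.X i) ^ ((e i : ℕ))

lemma monomial_eq_prod (a : Fin n →₀ ℕ) :
    (∏ i : Fin n, (X i : MvPolynomial (Fin n) ℤ) ^ a i) = monomial a 1 := by
  rw [← prod_X_pow_eq_monomial]
  exact (Finset.prod_subset (Finset.subset_univ _) (fun x _ hx => by
    rw [Finsupp.notMem_support_iff.1 hx, pow_zero])).symm

lemma monomial_mem (a : Fin n →₀ ℕ) :
    (monomial a 1 : MvPolynomial (Fin n) ℤ) ∈ Submodule.span (AA n) (Set.range (bb n)) := by
  have wf : WellFounded (fun a b : (Fin n →₀ ℕ) => toLex a < toLex b) :=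
    InvImage.wf toLex (IsWellFounded.wf (α := Lex (Fin n →₀ ℕ)) (r := (· < ·)))
  induction a using WellFounded.induction wf with
  | _ a ih =>
  by_cases hle : ∀ i : Fin n, a i ≤ (i : ℕ)
  · refine Submodule.subset_span ⟨fun i => ⟨a i, Nat.lt_succ_of_le (hle i)⟩, ?_⟩
    rw [bb]
    exact monomial_eq_prod a
  · push_neg at hle
    obtain ⟨kk, hkk⟩ := hle
    set k := (kk : ℕ) with hkdef
    set a' : Fin n →₀ ℕ := a - Finsupp.single kk (k + 1) with ha'
    have ha'app : ∀ j, a' j = a j - (Finsupp.single kk (k + 1)) j := fun j => by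
      rw [ha', Finsupp.tsub_apply]
    have hsplit : (monomial a (1 : ℤ) : MvPolynomial (Fin n) ℤ)
        = monomial a' 1 * (X kk) ^ (k + 1) := by
      have hfs : a = a' + Finsupp.single kk (k + 1) := by
        ext j
        rw [Finsupp.add_apply, ha'app j]
        rcases eq_or_ne j kk with rfl | hne
        · rw [Finsupp.single_apply, if_pos rfl]
          omega
        · rw [Finsupp.single_apply, if_neg (fun h => hne h.symm)]
          omega
      rw [X_pow_eq_monomial, monomial_mul, one_mul, ← hfs]
    rw [hsplit]
    have h1 := mul_mem_span (y := (monomial a' 1 : MvPolynomial (Fin n) ℤ)) (X_pow_mem kk)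
    refine Submodule.span_le.2 ?_ h1
    rintro _ ⟨_, ⟨c, hc1, hc2, rfl⟩, rfl⟩
    show (monomial a' 1 : MvPolynomial (Fin n) ℤ) * monomial c 1 ∈ _
    rw [monomial_mul, one_mul]
    refine ih (a' + c) ?_
    show Finsupp.Lex (· < ·) (· < ·) (a' + c) a
    refine Finsupp.lex_def.2 ⟨kk, fun d hd => ?_, ?_⟩
    · have hdk : (d : ℕ) < k := hd
      rw [Finsupp.add_apply, ha'app d, hc1 d hdk, Finsupp.single_apply,
        if_neg (fun h => by rw [← h] at hdk; omega)]
      omega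
    · rw [Finsupp.add_apply, ha'app kk, Finsupp.single_apply, if_pos rfl]
      omega

lemma span_bb (n : ℕ) :
    ⊤ ≤ Submodule.span (AA n) (Set.range (bb n)) := by
  intro p _
  rw [← support_sum_monomial_coeff p]
  refine Submodule.sum_mem _ fun v _ => ?_
  have hmem : (C (coeff v p) : MvPolynomial (Fin n) ℤ) ∈ AA n := by
    have := (AA n).algebraMap_mem (coeff v p)
    rwa [MvPolynomial.algebraMap_eq] at this
  have : (monomial v (coeff v p) : MvPolynomial (Fin n) ℤ)
      = (⟨C (coeff v p), hmem⟩ : AA n) • monomial v 1 := by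
    rw [Algebra.smul_def,
      show (algebraMap (AA n) (MvPolynomial (Fin n) ℤ)) ⟨C (coeff v p), hmem⟩
        = C (coeff v p) from rfl, C_mul_monomial, mul_one]
  rw [this]
  exact Submodule.smul_mem _ _ (monomial_mem v)

end Stmt11

namespace Stmt11

variable {n : ℕ}

-- ====== independence part ======

abbrev LL (n : ℕ) := FractionRing (MvPolynomial (Fin n) ℤ)

noncomputable def φ (n : ℕ) : MvPolynomial (Fin n) ℤ →+* LL n :=
  algebraMap (MvPolynomial (Fin n) ℤ) (LL n)

lemma φ_inj (n : ℕ) : Function.Injective (φ n) :=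
  IsFractionRing.injective _ _

lemma map_nzd (π : Equiv.Perm (Fin n)) :
    Submonoid.map ((renameEquiv ℤ π).toRingEquiv : MvPolynomial (Fin n) ℤ ≃+* MvPolynomial (Fin n) ℤ).toMonoidHom
      (nonZeroDivisors (MvPolynomial (Fin n) ℤ)) = nonZeroDivisors (MvPolynomial (Fin n) ℤ) := by
  have hinj : Function.Injective (rename (R := ℤ) ⇑π) :=
    rename_injective _ π.injective
  ext x
  simp only [Submonoid.mem_map, mem_nonZeroDivisors_iff_ne_zero]
  constructor
  · rintro ⟨y, hy, rfl⟩
    intro h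
    exact hy (hinj (by simpa using h))
  · intro hx
    refine ⟨rename ⇑π.symm x, fun h => hx ?_, ?_⟩
    · have : rename (⇑π) (rename (⇑π.symm) x) = rename ⇑π 0 := by rw [h]
      rw [rename_rename, map_zero] at this
      rw [show ⇑π ∘ ⇑π.symm = id from funext (fun t => π.apply_symm_apply t), rename_id] at this
      exact this
    · show rename (⇑π) (rename (⇑π.symm) x) = x
      rw [rename_rename, show ⇑π ∘ ⇑π.symm = id from funext (fun t => π.apply_symm_apply t),
        rename_id, AlgHom.id_apply]

/-- the action of a permutation on the fraction field -/
noncomputable def ract (π : Equiv.Perm (Fin n)) : LL n ≃+* LL n :=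
  IsLocalization.ringEquivOfRingEquiv (LL n) (LL n) (renameEquiv ℤ π).toRingEquiv (map_nzd π)

lemma ract_algebraMap (π : Equiv.Perm (Fin n)) (x : MvPolynomial (Fin n) ℤ) :
    ract π (φ n x) = φ n (rename π x) :=
  IsLocalization.ringEquivOfRingEquiv_eq _ _

lemma LL_hom_ext {f g : LL n →+* LL n} (h : ∀ x, f (φ n x) = g (φ n x)) : f = g :=
  IsLocalization.ringHom_ext (nonZeroDivisors (MvPolynomial (Fin n) ℤ)) (RingHom.ext h)

noncomputable def ractHom (n : ℕ) : Equiv.Perm (Fin n) →* (LL n ≃+* LL n) where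
  toFun := ract
  map_one' := by
    apply RingEquiv.toRingHom_injective
    apply LL_hom_ext
    intro x
    show ract 1 (φ n x) = φ n x
    rw [ract_algebraMap]
    congr 1
    rw [show ⇑(1 : Equiv.Perm (Fin n)) = id from rfl, rename_id, AlgHom.id_apply]
  map_mul' := fun σ τ => by
    apply RingEquiv.toRingHom_injective
    apply LL_hom_ext
    intro x
    show ract (σ * τ) (φ n x) = ract σ (ract τ (φ n x))
    rw [ract_algebraMap, ract_algebraMap, ract_algebraMap]
    congr 1
    rw [rename_rename]
    rfl

noncomputable instance : MulSemiringAction (Equiv.Perm (Fin n)) (LL n) :=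
  MulSemiringAction.compHom _ (ractHom n)

end Stmt11

namespace Stmt11

lemma smul_φ (π : Equiv.Perm (Fin n)) (x : MvPolynomial (Fin n) ℤ) :
    π • (φ n x) = φ n (rename π x) :=
  ract_algebraMap π x

instance : FaithfulSMul (Equiv.Perm (Fin n)) (LL n) where
  eq_of_smul_eq_smul := by
    intro π π' h
    ext i
    have h1 := h (φ n (X i))
    rw [smul_φ, smul_φ, rename_X, rename_X] at h1
    have h2 : (X (π i) : MvPolynomial (Fin n) ℤ) = X (π' i) := φ_inj n h1
    exact congrArg Fin.val (X_injective h2)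

noncomputable abbrev FF' (n : ℕ) : Subfield (LL n) :=
  FixedPoints.subfield (Equiv.Perm (Fin n)) (LL n)

lemma mem_FF'_iff (x : LL n) : x ∈ FF' n ↔ ∀ π : Equiv.Perm (Fin n), π • x = x := by
  rw [FF', FixedPoints.subfield]
  exact MulAction.mem_fixedPoints

lemma AA_isSymmetric {a : MvPolynomial (Fin n) ℤ} (ha : a ∈ AA n) : a.IsSymmetric := by
  rw [AA_eq_symm n] at ha
  exact ha

lemma φ_symm_mem {p : MvPolynomial (Fin n) ℤ} (hp : p.IsSymmetric) : φ n p ∈ FF' n := by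
  rw [mem_FF'_iff]
  intro π
  rw [smul_φ, hp π]

lemma finrank_LL : Module.finrank (FF' n) (LL n) = n.factorial := by
  rw [FixedPoints.finrank_eq_card (Equiv.Perm (Fin n)) (LL n), Fintype.card_perm,
    Fintype.card_fin]

lemma card_index : Fintype.card ((i : Fin n) → Fin ((i : ℕ) + 1)) = n.factorial := by
  rw [Fintype.card_pi]
  simp only [Fintype.card_fin]
  induction n with
  | zero => simp
  | succ m ih =>
    rw [Fin.prod_univ_castSucc]
    simp only [Fin.coe_castSucc] at *
    rw [ih, Fin.val_last, Nat.factorial_succ, mul_comm]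

noncomputable def bbL (n : ℕ) (e : (i : Fin n) → Fin ((i : ℕ) + 1)) : LL n :=
  φ n (bb n e)

lemma φ_mem_spanF (p : MvPolynomial (Fin n) ℤ) :
    φ n p ∈ Submodule.span (FF' n) (Set.range (bbL n)) := by
  have hp : p ∈ Submodule.span (AA n) (Set.range (bb n)) := span_bb n Submodule.mem_top
  induction hp using Submodule.span_induction with
  | mem x hx =>
    obtain ⟨e, rfl⟩ := hx
    exact Submodule.subset_span ⟨e, rfl⟩
  | zero => rw [map_zero]; exact Submodule.zero_mem _
  | add x y _ _ hx hy => rw [map_add]; exact Submodule.add_mem _ hx hy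
  | smul a x _ hx =>
    have hmem : φ n ↑a ∈ FF' n := φ_symm_mem (AA_isSymmetric a.2)
    have : φ n (a • x) = (⟨φ n ↑a, hmem⟩ : FF' n) • φ n x := by
      rw [Algebra.smul_def, show algebraMap (AA n) (MvPolynomial (Fin n) ℤ) a = ↑a from rfl,
        map_mul]
      rfl
    rw [this]
    exact Submodule.smul_mem _ _ hx

set_option synthInstance.maxHeartbeats 1000000 in
lemma span_bbL : ⊤ ≤ Submodule.span (FF' n) (Set.range (bbL n)) := by
  intro l _
  obtain ⟨p, q, hq, rfl⟩ := IsFractionRing.div_surjective (A := MvPolynomial (Fin n) ℤ) l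
  have hq0 : q ≠ 0 := nonZeroDivisors.ne_zero hq
  -- the "norm" of q
  set N : MvPolynomial (Fin n) ℤ := ∏ π : Equiv.Perm (Fin n), rename ⇑π q with hN
  set M : MvPolynomial (Fin n) ℤ :=
    ∏ π ∈ Finset.univ.erase (1 : Equiv.Perm (Fin n)), rename ⇑π q with hM
  have hNqM : N = q * M := by
    rw [hN, hM, ← Finset.mul_prod_erase Finset.univ _ (Finset.mem_univ 1),
      show ⇑(1 : Equiv.Perm (Fin n)) = id from rfl, rename_id, AlgHom.id_apply]
  have hterm : ∀ π : Equiv.Perm (Fin n), rename ⇑π q ≠ 0 := fun π h =>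
    hq0 (rename_injective _ π.injective (by simpa using h))
  have hN0 : N ≠ 0 := Finset.prod_ne_zero_iff.2 fun π _ => hterm π
  have hM0 : M ≠ 0 := Finset.prod_ne_zero_iff.2 fun π _ => hterm π
  have hNsymm : N.IsSymmetric := by
    intro τ
    rw [hN, map_prod]
    simp only [rename_rename]
    exact Fintype.prod_equiv (Equiv.mulLeft τ) _ _ (fun π => by
      congr 1)
  have hNF : φ n N ∈ FF' n := φ_symm_mem hNsymm
  have hφN0 : φ n N ≠ 0 := fun h => hN0 (φ_inj n (by rwa [map_zero]))
  have hkey : φ n p / φ n q = (⟨(φ n N)⁻¹, Subfield.inv_mem _ hNF⟩ : FF' n) • φ n (p * M) := by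
    have : ((⟨(φ n N)⁻¹, Subfield.inv_mem _ hNF⟩ : FF' n) • φ n (p * M) : LL n)
        = (φ n N)⁻¹ * φ n (p * M) := rfl
    rw [this, map_mul, hNqM, map_mul]
    have hφq0 : φ n q ≠ 0 := fun h => hq0 (φ_inj n (by rwa [map_zero]))
    have hφM0 : φ n M ≠ 0 := fun h => hM0 (φ_inj n (by rwa [map_zero]))
    field_simp
  show φ n p / φ n q ∈ _
  rw [hkey]
  exact Submodule.smul_mem _ _ (φ_mem_spanF _)

lemma li_bbL : LinearIndependent (FF' n) (bbL n) :=
  linearIndependent_of_top_le_span_of_card_eq_finrank span_bbL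
    (by rw [card_index, finrank_LL])

lemma li_bb (n : ℕ) : LinearIndependent (AA n) (bb n) := by
  rw [Fintype.linearIndependent_iff]
  intro g hg e
  have happ : φ n (∑ e, g e • bb n e) = 0 := by rw [hg, map_zero]
  rw [map_sum] at happ
  have h2 : ∀ e, φ n ((g e) • bb n e)
      = (⟨φ n ↑(g e), φ_symm_mem (AA_isSymmetric (g e).2)⟩ : FF' n)
        • bbL n e := by
    intro e
    rw [Algebra.smul_def, show algebraMap (AA n) (MvPolynomial (Fin n) ℤ) (g e) = ↑(g e) from rfl,
      map_mul]
    rfl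
  simp only [h2] at happ
  have := (Fintype.linearIndependent_iff.1 (li_bbL (n := n))) _ happ e
  have hφ : φ n ↑(g e) = 0 := congrArg Subtype.val this
  have : (↑(g e) : MvPolynomial (Fin n) ℤ) = 0 := φ_inj n (by rwa [map_zero])
  exact Subtype.ext this

end Stmt11


/-- `ℤ[X₁,…,Xₙ]` is free of rank `n!` over the subring
`ℤ[Σ₁,…,Σₙ]` generated by the elementary symmetric polynomials, with basis the
monomials `X₁^{e₁} ⋯ Xₙ^{eₙ}` with `0 ≤ eᵢ < i`. -/
theorem mvPolynomial_free_over_symmetric {n : ℕ} :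
    ∃ bas : Module.Basis ((i : Fin n) → Fin ((i : ℕ) + 1))
        (Algebra.adjoin ℤ {p : MvPolynomial (Fin n) ℤ |
          ∃ k ∈ Finset.Icc 1 n, p = MvPolynomial.esymm (Fin n) ℤ k})
        (MvPolynomial (Fin n) ℤ),
      ∀ e, bas e = ∏ i : Fin n, (MvPolynomial.X i) ^ ((e i : ℕ)) := by
  exact ⟨Module.Basis.mk (Stmt11.li_bb n) (Stmt11.span_bb n), fun e => Module.Basis.mk_apply _ _ e⟩
end

section
/- Let K be a field of characteristic 0 or p > n and R_n = K[x_1,...,x_{n-1}]/(x_1,...,x_{n-1})². If i_1, ..., i_n ∈ {0,1,...,n-1} (with x_0 := 1) and there exists k ≥ 1 with |{j : i_j = 0}| < |{j : i_j = k}|, then the pure tensor x_{i_1} ⊗ x_{i_2} ⊗ ⋯ ⊗ x_{i_n} lies in the ideal I(R_n, K) of R_n^{⊗n}. -/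
open scoped TensorProduct
open PiTensorProduct

/-- The maximally degenerate rank-`n` algebra `Rₙ = K[x₁,…,x_{n-1}]/(x₁,…,x_{n-1})²`. -/
noncomputable abbrev degRing (K : Type*) [Field K] (n : ℕ) : Type _ :=
  MvPolynomial (Fin (n - 1)) K ⧸
    (Ideal.span (Set.range (MvPolynomial.X : Fin (n - 1) → MvPolynomial (Fin (n - 1)) K))) ^ 2

/-- The generators `x₀ := 1` and `x_k :=` (image of the variable `X_{k-1}`) of `Rₙ`. -/
noncomputable def xGen (K : Type*) [Field K] (n : ℕ) (k : Fin n) : degRing K n :=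
  if h : (k : ℕ) = 0 then 1
  else Ideal.Quotient.mk _ (MvPolynomial.X (⟨(k : ℕ) - 1, by omega⟩ : Fin (n - 1)))

set_option synthInstance.maxHeartbeats 1000000
set_option maxHeartbeats 4000000

lemma xGen_mul_xGen_eq_zero {K : Type*} [Field K] {n : ℕ} {k m : Fin n}
    (hk : (k : ℕ) ≠ 0) (hm : (m : ℕ) ≠ 0) : xGen K n k * xGen K n m = 0 := by
  rw [xGen, xGen, dif_neg hk, dif_neg hm, ← _root_.map_mul, Ideal.Quotient.eq_zero_iff_mem,
    pow_two]
  exact Ideal.mul_mem_mul (Ideal.subset_span ⟨_, rfl⟩) (Ideal.subset_span ⟨_, rfl⟩)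

lemma sCoeff_one_xGen {K : Type*} [Field K] {n : ℕ} (b : Module.Basis (Fin n) K (degRing K n))
    {k : Fin n} (hk : (k : ℕ) ≠ 0) : sCoeff b (xGen K n k) 1 = 0 := by
  have : Nonempty (Fin n) := ⟨k⟩
  have h2 : xGen K n k * xGen K n k = 0 := xGen_mul_xGen_eq_zero hk hk
  have hnil : IsNilpotent (Algebra.leftMulMatrix b (xGen K n k)) :=
    ⟨2, by rw [pow_two, ← _root_.map_mul, h2, map_zero]⟩
  have htr : (Algebra.leftMulMatrix b (xGen K n k)).trace = 0 :=
    (Matrix.isNilpotent_trace_of_isNilpotent hnil).eq_zero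
  have h := Matrix.trace_eq_neg_charpoly_coeff (Algebra.leftMulMatrix b (xGen K n k))
  rw [htr, Fintype.card_fin, eq_comm, neg_eq_zero] at h
  rw [sCoeff, h, mul_zero]

lemma mu_rec {K : Type*} [Field K] {d : ℕ} (hfact : ((d.factorial : K)) ≠ 0) (m : ℕ)
    (h1 : 1 ≤ m) (hmd : m < d) :
    (m : K) * ((-1 : K) ^ (d - 1 - (m - 1)) *
        (((m - 1).factorial * (d - 1 - (m - 1)).factorial : ℕ) : K) / (d.factorial : K)) +
      ((d - m : ℕ) : K) * ((-1 : K) ^ (d - 1 - m) *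
        ((m.factorial * (d - 1 - m).factorial : ℕ) : K) / (d.factorial : K)) = 0 := by
  obtain ⟨m', rfl⟩ : ∃ m', m = m' + 1 := ⟨m - 1, by omega⟩
  obtain ⟨j, rfl⟩ : ∃ j, d = m' + 1 + j + 1 := ⟨d - m' - 2, by omega⟩
  rw [show m' + 1 + j + 1 - 1 - (m' + 1 - 1) = j + 1 from by omega,
    show m' + 1 + j + 1 - 1 - (m' + 1) = j from by omega,
    show m' + 1 - 1 = m' from by omega,
    show m' + 1 + j + 1 - (m' + 1) = j + 1 from by omega,
    mul_div_assoc', mul_div_assoc', ← add_div, div_eq_zero_iff]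
  left
  push_cast [Nat.factorial_succ, pow_succ]
  ring

lemma mu_top {K : Type*} [Field K] {d : ℕ} (hfact : ((d.factorial : K)) ≠ 0) (h1 : 1 ≤ d) :
    (d : K) * ((-1 : K) ^ (d - 1 - (d - 1)) *
        (((d - 1).factorial * (d - 1 - (d - 1)).factorial : ℕ) : K) / (d.factorial : K)) = 1 := by
  obtain ⟨d', rfl⟩ : ∃ d', d = d' + 1 := ⟨d - 1, by omega⟩
  rw [Nat.sub_self, show d' + 1 - 1 = d' from rfl, mul_div_assoc']
  rw [show ((d' + 1 : ℕ) : K) * ((-1 : K) ^ 0 * ((d'.factorial * Nat.factorial 0 : ℕ) : K)) =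
      (((d' + 1).factorial : ℕ) : K) from by
        push_cast [Nat.factorial_succ, Nat.factorial_zero]; ring]
  exact div_self hfact

/-- Over a field of characteristic `0` or `p > n`: if
`i₁,…,iₙ ∈ {0,…,n-1}` and for some `k ≥ 1` fewer of the `i_j` equal `0` than equal `k`,
then `x_{i₁} ⊗ ⋯ ⊗ x_{iₙ} ∈ I(Rₙ, K)`. -/
theorem degenerate_pure_tensor_mem_ideal {K : Type*} [Field K] {n p : ℕ} [CharP K p]
    (hp : p = 0 ∨ n < p) (b : Module.Basis (Fin n) K (degRing K n)) (i : Fin n → Fin n)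
    (hk : ∃ k : Fin n, (k : ℕ) ≠ 0 ∧
      (Finset.univ.filter (fun j => (i j : ℕ) = 0)).card <
        (Finset.univ.filter (fun j => i j = k)).card) :
    PiTensorProduct.tprod K (fun j => xGen K n (i j)) ∈ snIdeal b := by
  classical
  obtain ⟨k, hk0, hcard⟩ := hk
  have hn0 : 0 < n := k.pos
  set a : degRing K n := xGen K n k with ha
  set T : Finset (Fin n) := Finset.univ.filter (fun j => i j = k) with hT
  set S0 : Finset (Fin n) := Finset.univ.filter (fun j => (i j : ℕ) = 0) with hS0
  set U : Finset (Fin n) := S0 ∪ T with hU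
  set d : ℕ := T.card with hd
  have hd1 : 1 ≤ d := by omega
  have hdn : d ≤ n := by rw [hd]; simpa using Finset.card_le_univ T
  have hfact : ((d.factorial : K)) ≠ 0 := by
    rcases hp with hp0 | hpn
    · subst hp0
      haveI := CharP.charP_to_charZero K
      exact Nat.cast_ne_zero.mpr (Nat.factorial_ne_zero d)
    · have hprime : p.Prime := (CharP.char_is_prime_or_zero K p).resolve_right (by omega)
      rw [Ne, CharP.cast_eq_zero_iff K p]
      intro hdvd
      have := (Nat.Prime.dvd_factorial hprime).mp hdvd
      omega
  have hmemT : ∀ q, q ∈ T ↔ i q = k := by intro q; simp [hT]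
  have hmemS0 : ∀ q, q ∈ S0 ↔ (i q : ℕ) = 0 := by intro q; simp [hS0]
  set t : Finset (Fin n) → (⨂[K] _ : Fin n, degRing K n) :=
    fun s => tprod K (fun q => if q ∈ s then a else if q ∈ U then 1 else xGen K n (i q))
    with htdef
  set μ : ℕ → K := fun m => (-1 : K) ^ (d - 1 - m) *
    ((m.factorial * (d - 1 - m).factorial : ℕ) : K) / (d.factorial : K) with hμ
  -- the target tensor is `t T`
  have htT : PiTensorProduct.tprod K (fun j => xGen K n (i j)) = t T := by
    simp only [htdef]
    congr 1
    funext q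
    by_cases hqT : q ∈ T
    · rw [if_pos hqT, (hmemT q).mp hqT]
    · by_cases hqU : q ∈ U
      · have hq0 : (i q : ℕ) = 0 := (hmemS0 q).mp ((Finset.mem_union.mp hqU).resolve_right hqT)
        rw [if_neg hqT, if_pos hqU, xGen, dif_pos hq0]
      · rw [if_neg hqT, if_neg hqU]
  -- the basic generator of the ideal
  have hz : (-(∑ s ∈ Finset.powersetCard 1 (Finset.univ : Finset (Fin n)),
      tprod K (fun q => if q ∈ s then a else 1))) ∈ snIdeal b := by
    apply Ideal.subset_span
    refine ⟨a, ⟨0, hn0⟩, ?_⟩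
    have h0 : sCoeff b a (((⟨0, hn0⟩ : Fin n) : ℕ) + 1) = 0 := by
      rw [show (((⟨0, hn0⟩ : Fin n) : ℕ) + 1) = 1 from rfl, ha]
      exact sCoeff_one_xGen b hk0
    rw [h0, map_zero, zero_sub]
  -- the relations in the ideal
  have hrel : ∀ c ∈ U.powersetCard (d - 1),
      (∑ q ∈ U \ c, t (insert q c)) ∈ snIdeal b := by
    intro c hc
    obtain ⟨hcU, hccard⟩ := Finset.mem_powersetCard.mp hc
    have keyq : ∀ q : Fin n,
        t c * tprod K (fun p => if p ∈ ({q} : Finset (Fin n)) then a else 1)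
          = if q ∈ U \ c then t (insert q c) else 0 := by
      intro q
      simp only [htdef]
      rw [PiTensorProduct.tprod_mul_tprod]
      by_cases hqc : q ∈ c
      · rw [if_neg (by simp [Finset.mem_sdiff, hqc])]
        refine MultilinearMap.map_coord_zero _ q ?_
        simp only [Pi.mul_apply, if_pos hqc, if_pos (Finset.mem_singleton_self q)]
        rw [ha]
        exact xGen_mul_xGen_eq_zero hk0 hk0
      · by_cases hqU : q ∈ U
        · rw [if_pos (Finset.mem_sdiff.mpr ⟨hqU, hqc⟩)]
          congr 1
          funext p
          simp only [Pi.mul_apply]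
          by_cases hpq : p = q
          · subst hpq
            rw [if_neg hqc, if_pos hqU, if_pos (Finset.mem_singleton_self p), one_mul,
              if_pos (Finset.mem_insert_self p c)]
          · rw [if_neg (fun h => hpq (Finset.mem_singleton.mp h)), mul_one]
            by_cases hpc : p ∈ c
            · rw [if_pos hpc, if_pos (Finset.mem_insert_of_mem hpc)]
            · rw [if_neg hpc, if_neg (fun h => hpc ((Finset.mem_insert.mp h).resolve_left hpq))]
        · rw [if_neg (by simp [Finset.mem_sdiff, hqU])]
          refine MultilinearMap.map_coord_zero _ q ?_
          have hqS0 : (i q : ℕ) ≠ 0 := fun h =>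
            hqU (Finset.mem_union_left _ ((hmemS0 q).mpr h))
          simp only [Pi.mul_apply, if_neg hqc, if_neg hqU,
            if_pos (Finset.mem_singleton_self q)]
          rw [ha]
          exact xGen_mul_xGen_eq_zero hqS0 hk0
    have hz' : (∑ s ∈ Finset.powersetCard 1 (Finset.univ : Finset (Fin n)),
        tprod K (fun q => if q ∈ s then a else 1)) ∈ snIdeal b := neg_mem_iff.mp hz
    have hval : (t c) * (∑ s ∈ Finset.powersetCard 1 (Finset.univ : Finset (Fin n)),
        tprod K (fun q => if q ∈ s then a else 1)) = ∑ q ∈ U \ c, t (insert q c) := by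
      rw [show (t c) * (∑ s ∈ Finset.powersetCard 1 (Finset.univ : Finset (Fin n)),
            tprod K (fun q => if q ∈ s then a else 1))
          = ∑ s ∈ Finset.powersetCard 1 (Finset.univ : Finset (Fin n)),
            t c * tprod K (fun q => if q ∈ s then a else 1) from
        Finset.mul_sum (Finset.powersetCard 1 (Finset.univ : Finset (Fin n)))
          (fun s => tprod K (fun q => if q ∈ s then a else 1)) (t c)]
      rw [Finset.powersetCard_one, Finset.sum_map]
      calc ∑ q ∈ Finset.univ, t c *
            tprod K (fun p => if p ∈ ({q} : Finset (Fin n)) then a else 1)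
          = ∑ q ∈ Finset.univ, (if q ∈ U \ c then t (insert q c) else 0) :=
            Finset.sum_congr rfl fun q _ => keyq q
        _ = ∑ q ∈ Finset.univ ∩ (U \ c), t (insert q c) := Finset.sum_ite_mem _ _ _
        _ = ∑ q ∈ U \ c, t (insert q c) := by rw [Finset.univ_inter]
    exact hval ▸ Ideal.mul_mem_left _ (t c) hz'
  -- rewriting the relations as sums over `d`-subsets
  have hform : ∀ c ∈ U.powersetCard (d - 1),
      (∑ q ∈ U \ c, t (insert q c)) = ∑ s ∈ U.powersetCard d, if c ⊆ s then t s else 0 := by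
    intro c hc
    obtain ⟨hcU, hccard⟩ := Finset.mem_powersetCard.mp hc
    rw [← Finset.sum_filter]
    have hinj : ∀ q ∈ U \ c, ∀ q' ∈ U \ c, insert q c = insert q' c → q = q' := by
      intro q hq q' hq' h
      have h1 := Finset.mem_insert_self q c
      rw [h] at h1
      exact (Finset.mem_insert.mp h1).resolve_right fun hh => (Finset.mem_sdiff.mp hq).2 hh
    have hset : (U.powersetCard d).filter (fun s => c ⊆ s)
        = (U \ c).image (fun q => insert q c) := by
      ext s
      simp only [Finset.mem_filter, Finset.mem_powersetCard, Finset.mem_image, Finset.mem_sdiff]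
      constructor
      · rintro ⟨⟨hsU, hscard⟩, hcs⟩
        obtain ⟨q, hq, rfl⟩ := Finset.exists_eq_insert_iff.mpr ⟨hcs, by omega⟩
        exact ⟨q, ⟨hsU (Finset.mem_insert_self q c), hq⟩, rfl⟩
      · rintro ⟨q, ⟨hqU, hqc⟩, rfl⟩
        refine ⟨⟨Finset.insert_subset hqU hcU, ?_⟩, Finset.subset_insert q c⟩
        rw [Finset.card_insert_of_notMem hqc]
        omega
    rw [hset, Finset.sum_image hinj]
  -- the coefficient identity
  have hcoeff : ∀ s ∈ U.powersetCard d,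
      (∑ c ∈ s.powersetCard (d - 1), μ ((c ∩ T).card)) = if s = T then 1 else 0 := by
    intro s hs
    obtain ⟨hsU, hscard⟩ := Finset.mem_powersetCard.mp hs
    have himg : s.powersetCard (d - 1) = s.image s.erase := by
      ext c
      simp only [Finset.mem_powersetCard, Finset.mem_image]
      constructor
      · rintro ⟨hcs, hccard⟩
        obtain ⟨q, hq, rfl⟩ := Finset.exists_eq_insert_iff.mpr ⟨hcs, by omega⟩
        exact ⟨q, Finset.mem_insert_self q c, by rw [Finset.erase_insert hq]⟩
      · rintro ⟨q, hq, rfl⟩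
        refine ⟨Finset.erase_subset q s, ?_⟩
        rw [Finset.card_erase_of_mem hq]
        omega
    have hinj : ∀ q ∈ s, ∀ q' ∈ s, s.erase q = s.erase q' → q = q' := by
      intro q hq q' hq' h
      by_contra hne
      have h1 : q' ∈ s.erase q := Finset.mem_erase.mpr ⟨fun hh => hne hh.symm, hq'⟩
      rw [h] at h1
      exact (Finset.mem_erase.mp h1).1 rfl
    rw [himg, Finset.sum_image hinj]
    set m : ℕ := (s ∩ T).card with hm
    have hmd : m ≤ d := by
      rw [hm, hd]; exact Finset.card_le_card Finset.inter_subset_right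
    have hm1 : 1 ≤ m := by
      have h1 : s.card ≤ (s ∩ S0).card + (s ∩ T).card := by
        calc s.card = ((s ∩ S0) ∪ (s ∩ T)).card := by
              rw [← Finset.inter_union_distrib_left, Finset.inter_eq_left.mpr hsU]
          _ ≤ (s ∩ S0).card + (s ∩ T).card := Finset.card_union_le _ _
      have h2 : (s ∩ S0).card ≤ S0.card := Finset.card_le_card Finset.inter_subset_right
      omega
    have hq_val : ∀ q ∈ s, μ ((s.erase q ∩ T).card) = if q ∈ T then μ (m - 1) else μ m := by
      intro q hq
      by_cases hqT : q ∈ T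
      · rw [if_pos hqT]
        congr 1
        rw [show s.erase q ∩ T = (s ∩ T).erase q from by
            ext r
            simp only [Finset.mem_inter, Finset.mem_erase]
            tauto,
          Finset.card_erase_of_mem (Finset.mem_inter.mpr ⟨hq, hqT⟩)]
      · rw [if_neg hqT]
        congr 1
        rw [show s.erase q ∩ T = s ∩ T from by
            ext r
            simp only [Finset.mem_inter, Finset.mem_erase]
            constructor
            · rintro ⟨⟨_, hrs⟩, hrT⟩; exact ⟨hrs, hrT⟩
            · rintro ⟨hrs, hrT⟩; exact ⟨⟨fun hh => hqT (hh ▸ hrT), hrs⟩, hrT⟩]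
    have hsplit : (∑ q ∈ s, μ ((s.erase q ∩ T).card))
        = (m : K) * μ (m - 1) + ((d - m : ℕ) : K) * μ m := by
      calc ∑ q ∈ s, μ ((s.erase q ∩ T).card)
          = ∑ q ∈ s, (if q ∈ T then μ (m - 1) else μ m) := Finset.sum_congr rfl hq_val
        _ = (s.filter (· ∈ T)).card • μ (m - 1) + (s.filter (· ∉ T)).card • μ m := by
            rw [Finset.sum_ite, Finset.sum_const, Finset.sum_const]
        _ = (m : K) * μ (m - 1) + ((d - m : ℕ) : K) * μ m := by
            have e1 : s.filter (· ∈ T) = s ∩ T := Finset.filter_mem_eq_inter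
            have e2 : s.filter (· ∉ T) = s \ T := (Finset.sdiff_eq_filter s T).symm
            have e3 : (s ∩ T).card + (s \ T).card = s.card :=
              Finset.card_inter_add_card_sdiff s T
            rw [e1, e2, show (s \ T).card = d - m from by omega, nsmul_eq_mul, nsmul_eq_mul, hm]
    rw [hsplit]
    by_cases hsT : s = T
    · rw [if_pos hsT]
      have hmdeq : m = d := by rw [hm, hsT, Finset.inter_self, hd]
      rw [hmdeq, Nat.sub_self, Nat.cast_zero, zero_mul, add_zero]
      simp only [hμ]
      exact mu_top hfact hd1
    · rw [if_neg hsT]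
      have hmlt : m < d := by
        rcases Nat.lt_or_ge m d with h | h
        · exact h
        · exfalso
          have hme : m = d := le_antisymm hmd h
          have hsub : s ∩ T ⊆ T := Finset.inter_subset_right
          have : s ∩ T = T := Finset.eq_of_subset_of_card_le hsub (by omega)
          have hTs : T ⊆ s := by rw [← this]; exact Finset.inter_subset_left
          exact hsT (Finset.eq_of_subset_of_card_le
            (by rw [← this]; exact Finset.inter_subset_left) (by omega)).symm
      simp only [hμ]
      exact mu_rec hfact m hm1 hmlt
  -- the main identity
  have hTmem : T ∈ U.powersetCard d :=
    Finset.mem_powersetCard.mpr ⟨Finset.subset_union_right, hd.symm⟩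
  set ν : ℕ → (⨂[K] _ : Fin n, degRing K n) :=
    fun m => @algebraMap K (⨂[K] _ : Fin n, degRing K n) _ PiTensorProduct.instSemiring _ (μ m) with hν
  have hmain : t T = ∑ c ∈ U.powersetCard (d - 1),
      ν ((c ∩ T).card) * (∑ q ∈ U \ c, t (insert q c)) := by
    have step1 : ∀ c ∈ U.powersetCard (d - 1),
        ν ((c ∩ T).card) * (∑ q ∈ U \ c, t (insert q c))
          = ∑ s ∈ U.powersetCard d, (if c ⊆ s then ν ((c ∩ T).card) * t s else 0) := by
      intro c hc
      rw [hform c hc]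
      rw [show ν ((c ∩ T).card) * (∑ s ∈ U.powersetCard d, if c ⊆ s then t s else 0)
          = ∑ s ∈ U.powersetCard d, ν ((c ∩ T).card) * (if c ⊆ s then t s else 0) from
        Finset.mul_sum (R := (⨂[K] _ : Fin n, degRing K n)) _ _ _]
      refine Finset.sum_congr rfl fun s _ => ?_
      split
      · rfl
      · exact mul_zero (ν ((c ∩ T).card))
    rw [Finset.sum_congr rfl step1, Finset.sum_comm]
    have step2 : ∀ s ∈ U.powersetCard d,
        (∑ c ∈ U.powersetCard (d - 1), if c ⊆ s then ν ((c ∩ T).card) * t s else 0)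
          = (if s = T then t s else 0) := by
      intro s hs
      obtain ⟨hsU, hscard⟩ := Finset.mem_powersetCard.mp hs
      rw [← Finset.sum_filter]
      have hflt : (U.powersetCard (d - 1)).filter (fun c => c ⊆ s) = s.powersetCard (d - 1) := by
        ext c
        simp only [Finset.mem_filter, Finset.mem_powersetCard]
        exact ⟨fun ⟨⟨_, h2⟩, h3⟩ => ⟨h3, h2⟩, fun ⟨h1, h2⟩ => ⟨⟨h1.trans hsU, h2⟩, h1⟩⟩
      rw [hflt]
      rw [show (∑ c ∈ s.powersetCard (d - 1), ν ((c ∩ T).card) * t s)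
          = (∑ c ∈ s.powersetCard (d - 1), ν ((c ∩ T).card)) * t s from
        (Finset.sum_mul (R := (⨂[K] _ : Fin n, degRing K n)) _ _ _).symm]
      simp only [hν]
      rw [← map_sum (algebraMap K _), hcoeff s hs]
      by_cases hsT : s = T
      · rw [if_pos hsT, if_pos hsT, _root_.map_one]
        exact one_mul (t s)
      · rw [if_neg hsT, if_neg hsT, _root_.map_zero]
        exact zero_mul (t s)
    rw [Finset.sum_congr rfl step2, Finset.sum_ite_eq' (U.powersetCard d) T t, if_pos hTmem]
  rw [htT, hmain]
  exact Ideal.sum_mem _ fun c hc => Ideal.mul_mem_left _ _ (hrel c hc)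
end

section
/- Let ε and τ be partitions of n with τ_{k-1} > τ_k = 0, and suppose ε is obtained from τ by removing one box from row i (with i > 1) and adding a new row of length 1, i.e. ε = (τ_1,...,τ_{i-1}, τ_i - 1, τ_{i+1},...,τ_{k-1}, 1). Then the product of hook lengths of the boxes in the first row of the Young diagram of τ is at least the corresponding product for ε. -/
/-- `p : ℕ → ℕ` is a partition of `n` (rows indexed from `0`, weakly decreasing,
summing to `n`, vanishing from row `n` on). -/
def IsPartitionFun (n : ℕ) (p : ℕ → ℕ) : Prop :=
  Antitone p ∧ (∑ i ∈ Finset.range n, p i) = n ∧ ∀ i, n ≤ i → p i = 0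

/-- The hook length of the box in row `i`, column `j` (both `0`-indexed) of the Young
diagram of the partition `p` of `n`: `(p i - j) + #{k > i : p k > j}`. -/
def hookLen (n : ℕ) (p : ℕ → ℕ) (i j : ℕ) : ℕ :=
  (p i - j) + ((Finset.Ioo i n).filter (fun k => j < p k)).card

/-- The product of all hook lengths of the Young diagram of the partition `p` of `n`. -/
def hookProd (n : ℕ) (p : ℕ → ℕ) : ℕ :=
  ∏ i ∈ Finset.range n, ∏ j ∈ Finset.range (p i), hookLen n p i j

/-- Let `τ` be a partition of `n` with exactly `k` nonzero rows
(`τ_{k-1} > τ_k = 0`, rows `0`-indexed), and let `ε` be the partition obtained from `τ`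
by removing one box from row `i` (for some `0 < i < k`) and appending a new row of
length `1`. Then the product of the first-row hook lengths of `τ` is at least that
of `ε`. -/
theorem firstRow_hookProd_ge {n k i : ℕ} (τ ε : ℕ → ℕ)
    (hτ : IsPartitionFun n τ) (hε : IsPartitionFun n ε)
    (hk : 1 ≤ k) (hklast : 0 < τ (k - 1)) (hkzero : τ k = 0)
    (hi : 1 ≤ i) (hik : i < k)
    (hεdef : ∀ r, ε r = if r = i then τ i - 1 else if r = k then 1 else τ r) :
    (∏ j ∈ Finset.range (ε 0), hookLen n ε 0 j) ≤
      ∏ j ∈ Finset.range (τ 0), hookLen n τ 0 j := by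
  obtain ⟨hτa, hτs, hτz⟩ := hτ
  obtain ⟨hεa, hεs, hεz⟩ := hε
  have hεk : ε k = 1 := by rw [hεdef, if_neg (by omega : ¬ k = i), if_pos rfl]
  have hεi : ε i = τ i - 1 := by rw [hεdef, if_pos rfl]
  have hkn : k < n := by
    by_contra h
    have := hεz k (by omega); omega
  have hτi2 : 2 ≤ τ i := by
    have := hεa (le_of_lt hik)
    omega
  have hτi0 : τ i ≤ τ 0 := hτa (Nat.zero_le i)
  have hτ0 : 2 ≤ τ 0 := le_trans hτi2 hτi0
  have hε0 : ε 0 = τ 0 := by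
    rw [hεdef, if_neg (by omega : ¬ (0:ℕ) = i), if_neg (by omega : ¬ (0:ℕ) = k)]
  have hεm : ∀ m, m ≠ i → m ≠ k → ε m = τ m := by
    intro m h1 h2; rw [hεdef, if_neg h1, if_neg h2]
  have hτpos : ∀ m, m < k → 0 < τ m :=
    fun m hm => lt_of_lt_of_le hklast (hτa (by omega : m ≤ k-1))
  have hτ0m : ∀ m, k ≤ m → τ m = 0 :=
    fun m hm => Nat.le_zero.mp (hkzero ▸ hτa hm)
  set j0 := τ i - 1 with hj0def
  have hj01 : 1 ≤ j0 := by omega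
  have hj0lt : j0 < τ 0 := by omega
  -- counting sets
  have hA : (Finset.Ioo 0 n).filter (fun m => 0 < τ m) = Finset.Ioo 0 k := by
    ext m
    simp only [Finset.mem_filter, Finset.mem_Ioo]
    constructor
    · rintro ⟨⟨h1, h2⟩, h3⟩
      refine ⟨h1, ?_⟩
      by_contra h; push_neg at h
      have := hτ0m m h; omega
    · rintro ⟨h1, h2⟩
      exact ⟨⟨h1, by omega⟩, hτpos m h2⟩
  have hB : (Finset.Ioo 0 n).filter (fun m => 0 < ε m) = Finset.Ioo 0 (k+1) := by
    ext m
    simp only [Finset.mem_filter, Finset.mem_Ioo]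
    constructor
    · rintro ⟨⟨h1, h2⟩, h3⟩
      refine ⟨h1, ?_⟩
      by_contra h; push_neg at h
      rw [hεm m (by omega) (by omega), hτ0m m (by omega)] at h3; omega
    · rintro ⟨h1, h2⟩
      refine ⟨⟨h1, by omega⟩, ?_⟩
      by_cases hmi : m = i
      · rw [hmi]; omega
      by_cases hmk : m = k
      · rw [hmk]; omega
      rw [hεm m hmi hmk]
      exact hτpos m (by omega)
  have hCi : (Finset.Ioo 0 n).filter (fun m => j0 < τ m)
      = insert i ((Finset.Ioo 0 n).filter (fun m => j0 < ε m)) := by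
    ext m
    simp only [Finset.mem_insert, Finset.mem_filter, Finset.mem_Ioo]
    constructor
    · rintro ⟨⟨h1, h2⟩, h3⟩
      by_cases hmi : m = i
      · exact Or.inl hmi
      right
      have hmk : m ≠ k := by
        intro h; rw [h, hτ0m k le_rfl] at h3; omega
      rw [hεm m hmi hmk]
      exact ⟨⟨h1, h2⟩, h3⟩
    · rintro (rfl | ⟨⟨h1, h2⟩, h3⟩)
      · exact ⟨⟨by omega, by omega⟩, by omega⟩
      by_cases hmi : m = i
      · rw [hmi, hεi] at h3; omega
      by_cases hmk : m = k
      · rw [hmk, hεk] at h3; omega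
      rw [hεm m hmi hmk] at h3
      exact ⟨⟨h1, h2⟩, h3⟩
  have hinot : i ∉ (Finset.Ioo 0 n).filter (fun m => j0 < ε m) := by
    simp only [Finset.mem_filter, Finset.mem_Ioo, not_and]
    intro _; omega
  have hCcard : ((Finset.Ioo 0 n).filter (fun m => j0 < τ m)).card
      = ((Finset.Ioo 0 n).filter (fun m => j0 < ε m)).card + 1 := by
    rw [hCi, Finset.card_insert_of_notMem hinot]
  have hD : ∀ j, j ≠ 0 → j ≠ j0 →
      (Finset.Ioo 0 n).filter (fun m => j < ε m) = (Finset.Ioo 0 n).filter (fun m => j < τ m) := by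
    intro j hj hjj0
    ext m
    simp only [Finset.mem_filter, Finset.mem_Ioo, and_congr_right_iff]
    rintro ⟨h1, h2⟩
    by_cases hmi : m = i
    · rw [hmi, hεi]; omega
    by_cases hmk : m = k
    · rw [hmk, hεk, hτ0m k le_rfl]; omega
    rw [hεm m hmi hmk]
  -- hook length values
  have hg0 : hookLen n τ 0 0 = τ 0 + (k - 1) := by
    rw [hookLen, hA, Nat.card_Ioo]; omega
  have hf0 : hookLen n ε 0 0 = τ 0 + k := by
    rw [hookLen, hB, Nat.card_Ioo, hε0]; omega
  have hgj0 : hookLen n τ 0 j0 = hookLen n ε 0 j0 + 1 := by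
    rw [hookLen, hookLen, hCcard, hε0]; omega
  have hEq : ∀ j, j ≠ 0 → j ≠ j0 → hookLen n ε 0 j = hookLen n τ 0 j := by
    intro j h1 h2
    rw [hookLen, hookLen, hD j h1 h2, hε0]
  have hbound : hookLen n ε 0 j0 ≤ hookLen n τ 0 0 := by
    have hsub : (Finset.Ioo 0 n).filter (fun m => j0 < τ m) ⊆ Finset.Ioo 0 k := by
      intro m hm
      rw [← hA]
      simp only [Finset.mem_filter, Finset.mem_Ioo] at hm ⊢
      omega
    have hcard : ((Finset.Ioo 0 n).filter (fun m => j0 < τ m)).card ≤ k - 1 := by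
      have := Finset.card_le_card hsub
      rwa [Nat.card_Ioo] at this
    rw [hookLen, hε0, hg0]
    have : ((Finset.Ioo 0 n).filter (fun m => j0 < ε m)).card ≤ k - 1 := by omega
    omega
  -- final product manipulation
  have h0mem : (0:ℕ) ∈ Finset.range (τ 0) := by simp; omega
  have hj0mem : j0 ∈ (Finset.range (τ 0)).erase 0 :=
    Finset.mem_erase.mpr ⟨by omega, by simp [hj0lt]⟩
  rw [hε0, ← Finset.mul_prod_erase _ (hookLen n ε 0) h0mem,
    ← Finset.mul_prod_erase _ (hookLen n τ 0) h0mem,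
    ← Finset.mul_prod_erase _ (hookLen n ε 0) hj0mem,
    ← Finset.mul_prod_erase _ (hookLen n τ 0) hj0mem]
  have hP : ∏ j ∈ ((Finset.range (τ 0)).erase 0).erase j0, hookLen n ε 0 j
      = ∏ j ∈ ((Finset.range (τ 0)).erase 0).erase j0, hookLen n τ 0 j := by
    refine Finset.prod_congr rfl fun j hj => ?_
    simp only [Finset.mem_erase] at hj
    exact hEq j hj.2.1 hj.1
  rw [hP, hf0, hg0, hgj0]
  set P := ∏ j ∈ ((Finset.range (τ 0)).erase 0).erase j0, hookLen n τ 0 j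
  set b := hookLen n ε 0 j0
  have hb : b ≤ τ 0 + (k - 1) := hg0 ▸ hbound
  have hk1 : τ 0 + k = (τ 0 + (k - 1)) + 1 := by omega
  rw [hk1]
  nlinarith [Nat.zero_le P, Nat.zero_le b]
end
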